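/- Let p and q be positive integers. For any two search trees T1 and T2 on the complete bipartite graph K_{p,q}, dist(T1, T2) ≤ 2pq. -/

import Mathlib

open SimpleGraph

/-- A search tree (elimination tree) on a graph `G`, encoded by its ancestor
relation: `anc u v` means that `u` is an ancestor of `v` (possibly `u = v`).
Equivalently (for connected `G`): the root is a vertex `r`, joined to the roots
of search trees on each connected component of `G - r`. -/
structure SearchTree {V : Type} (G : SimpleGraph V) : Type where
  anc : V → V → Prop
  refl : ∀ v, anc v v
  antisymm : ∀ u v, anc u v → anc v u → u = v
  trans : ∀ u v w, anc u v → anc v w → anc u w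
  chain : ∀ u v w, anc u w → anc v w → anc u v ∨ anc v u
  root : ∃ r, ∀ v, anc r v
  edge_comparable : ∀ u v, G.Adj u v → anc u v ∨ anc v u
  desc_connected : ∀ v, (G.induce {u | anc v u}).Connected

namespace SearchTree

/-- The set of descendants of `v` (including `v`): the vertex set of the
subtree rooted at `v`. -/
def descSet {V : Type} {G : SimpleGraph V} (T : SearchTree G) (v : V) : Set V :=
  {u | T.anc v u}

/-- The height of a search tree: the maximal number of vertices on a
root-to-leaf path (a single-vertex tree has height 1). -/
noncomputable def height {V : Type} [Fintype V] {G : SimpleGraph V} (T : SearchTree G) : ℕ :=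
  Finset.univ.sup fun v => Set.ncard {u | T.anc u v}

end SearchTree

/-- `T'` is obtained from `T` by a rotation at a vertex `b` with parent `a`:
the subtree of `T` rooted at `a` (with vertex set `A`) becomes rooted at `b`,
`a` becomes the root of the component of `G[A] - b` containing `a`, and all
other subtrees are unchanged. The rotation is said to involve `a` and `b`. -/
def IsRotation {V : Type} {G : SimpleGraph V} (T T' : SearchTree G) (a b : V) : Prop :=
  a ≠ b ∧ T.anc a b ∧ T'.descSet b = T.descSet a ∧
    ∀ v, v ≠ a → v ≠ b → T'.descSet v = T.descSet v

/-- The rotation graph of `G`: vertices are the search trees on `G`, two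
trees being adjacent when they differ by a single rotation. It is the skeleton
of the graph associahedron `A(G)`; its diameter is `δ(A(G))`. -/
def rotationGraph {V : Type} (G : SimpleGraph V) : SimpleGraph (SearchTree G) where
  Adj T T' := ∃ a b, IsRotation T T' a b
  symm := by
    constructor
    rintro T T' ⟨a, b, hne, hanc, hb, hoth⟩
    have hanc' : T'.anc b a := by
      have ha : a ∈ T'.descSet b := by rw [hb]; exact T.refl a
      exact ha
    exact ⟨b, a, hne.symm, hanc', hb.symm, fun v h1 h2 => (hoth v h2 h1).symm⟩
  loopless := by
    constructor
    rintro T ⟨a, b, hne, hanc, hb, hoth⟩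
    have h : T.anc b a := by
      have ha : a ∈ T.descSet b := by rw [hb]; exact T.refl a
      exact ha
    exact hne (T.antisymm a b hanc h)

/-- The tree-depth of `G`: the smallest height of a search tree on `G`. -/
noncomputable def treeDepth {V : Type} [Fintype V] (G : SimpleGraph V) : ℕ :=
  sInf {h | ∃ T : SearchTree G, T.height = h}

/-- Adding a universal vertex to a graph. -/
def addUniversal {V : Type} (G : SimpleGraph V) : SimpleGraph (Option V) where
  Adj x y := match x, y with
    | none, none => False
    | none, some _ => True
    | some _, none => True
    | some a, some b => G.Adj a b
  symm := by
    constructor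
    rintro (_ | a) (_ | b) h
    · exact h.elim
    · trivial
    · trivial
    · exact G.symm.symm _ _ h
  loopless := by
    constructor
    rintro (_ | a) h
    · exact h
    · exact G.loopless.irrefl a h

/-- Disjoint union of two graphs. -/
def disjUnion {V W : Type} (G : SimpleGraph V) (H : SimpleGraph W) : SimpleGraph (V ⊕ W) where
  Adj x y := match x, y with
    | .inl a, .inl b => G.Adj a b
    | .inr a, .inr b => H.Adj a b
    | _, _ => False
  symm := by
    constructor
    rintro (a | a) (b | b) h
    · exact G.symm.symm _ _ h
    · exact h.elim
    · exact h.elim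
    · exact H.symm.symm _ _ h
  loopless := by
    constructor
    rintro (a | a) h
    · exact G.loopless.irrefl a h
    · exact H.loopless.irrefl a h

/-- Graphs built recursively from single vertices by adding universal vertices
and taking disjoint unions. -/
inductive TPBuild : {V : Type} → SimpleGraph V → Prop
  | single : TPBuild (⊥ : SimpleGraph PUnit)
  | addUniv {V : Type} {G : SimpleGraph V} : TPBuild G → TPBuild (addUniversal G)
  | union {V W : Type} {G : SimpleGraph V} {H : SimpleGraph W} :
      TPBuild G → TPBuild H → TPBuild (disjUnion G H)

/-- A graph is trivially perfect if it can be built recursively from single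
vertices by repeatedly adding universal vertices and taking disjoint unions. -/
def TriviallyPerfect {V : Type} (G : SimpleGraph V) : Prop :=
  ∃ (W : Type) (H : SimpleGraph W), TPBuild H ∧ Nonempty (G ≃g H)

/-- A graph is chordal if it has no induced cycle of length at least 4. -/
def Chordal {V : Type} (G : SimpleGraph V) : Prop :=
  ∀ n, 4 ≤ n → IsEmpty (cycleGraph n ↪g G)

/-- The treewidth of `G`: one less than the smallest clique number of a chordal
supergraph of `G` on the same vertex set. -/
noncomputable def treewidth {V : Type} (G : SimpleGraph V) : ℕ :=
  sInf {k | ∃ H : SimpleGraph V, G ≤ H ∧ Chordal H ∧ H.cliqueNum = k + 1}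

/-- An interval graph: the intersection graph of closed intervals on the real line. -/
def IsIntervalGraph {V : Type} (G : SimpleGraph V) : Prop :=
  ∃ lo hi : V → ℝ, (∀ v, lo v ≤ hi v) ∧
    ∀ u v, G.Adj u v ↔ u ≠ v ∧ lo u ≤ hi v ∧ lo v ≤ hi u

/-- The pathwidth of `G`: one less than the smallest clique number of an
interval supergraph of `G` on the same vertex set. -/
noncomputable def pathwidth {V : Type} (G : SimpleGraph V) : ℕ :=
  sInf {k | ∃ H : SimpleGraph V, G ≤ H ∧ IsIntervalGraph H ∧ H.cliqueNum = k + 1}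

/-- A vertex is simplicial if its neighborhood induces a clique. -/
def Simplicial {V : Type} (G : SimpleGraph V) (v : V) : Prop :=
  G.IsClique (G.neighborSet v)

/-- A set of vertices is (monophonically) convex if it can be obtained from the
full vertex set by iteratively deleting a simplicial vertex of the current
induced subgraph. -/
inductive MConvex {V : Type} (G : SimpleGraph V) : Set V → Prop
  | univ : MConvex G Set.univ
  | delete {S : Set V} {v : V} (hS : MConvex G S) (hv : v ∈ S)
      (hsimp : Simplicial (G.induce S) ⟨v, hv⟩) : MConvex G (S \ {v})

/-- `P` is the projection of the search tree `T` on the convex set `S`: the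
search tree on `G[S]` obtained from `T` by iteratively deleting the vertices
outside `S`; its ancestor relation is the restriction of that of `T`. -/
def IsProjection {V : Type} {G : SimpleGraph V} (S : Set V) (T : SearchTree G)
    (P : SearchTree (G.induce S)) : Prop :=
  ∀ u v : S, P.anc u v ↔ T.anc (↑u) (↑v)

/-- The complete split graph `SPK p q`: a clique `P` of `p` vertices, an
independent set `Q` of `q` vertices, and all edges between `P` and `Q`. -/
def SPK (p q : ℕ) : SimpleGraph (Fin p ⊕ Fin q) where
  Adj x y := x ≠ y ∧ (x.isLeft ∨ y.isLeft)
  symm := by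
    constructor
    rintro x y ⟨h1, h2⟩
    exact ⟨h1.symm, h2.symm⟩
  loopless := by
    constructor
    rintro x ⟨h, _⟩
    exact h rfl

namespace KPQ
set_option linter.unusedSectionVars false

open List

theorem SearchTree.ext' {V : Type} {G : SimpleGraph V} {T T' : SearchTree G}
    (h : ∀ u v, T.anc u v ↔ T'.anc u v) : T = T' := by
  have hanc : T.anc = T'.anc := funext₂ fun u v => propext (h u v)
  cases T; cases T'
  simp only at hanc
  subst hanc
  rfl

variable {V : Type} [DecidableEq V] [Fintype V]

/-- ancestry relation determined by a spine list; vertices not in `L` are pooled leaves,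
incomparable with each other, below everything in `L`. -/
def ancL (L : List V) (u v : V) : Prop :=
  u = v ∨ (u ∈ L ∧ L.idxOf u < L.idxOf v)

instance (L : List V) (u v : V) : Decidable (ancL L u v) := by
  unfold ancL; infer_instance

lemma ancL_refl (L : List V) (v : V) : ancL L v v := Or.inl rfl

lemma ancL_of_not_mem {L : List V} {u v : V} (hu : u ∉ L) : ancL L u v ↔ u = v := by
  constructor
  · rintro (rfl | ⟨h, _⟩)
    · rfl
    · exact absurd h hu
  · rintro rfl; exact ancL_refl L u

lemma ancL_of_mem_of_not_mem {L : List V} {u v : V} (hu : u ∈ L) (hv : v ∉ L) :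
    ancL L u v := by
  refine Or.inr ⟨hu, ?_⟩
  rw [List.idxOf_eq_length_iff.2 hv]
  exact List.idxOf_lt_length_iff.2 hu

lemma eq_of_indexOf_eq {L : List V} {u v : V} (hu : u ∈ L)
    (h : L.idxOf u = L.idxOf v) : u = v := by
  by_cases hv : v ∈ L
  · exact (List.idxOf_inj hu).1 h
  · exact absurd (h ▸ List.idxOf_eq_length_iff.2 hv) (Nat.ne_of_lt (List.idxOf_lt_length_iff.2 hu))

lemma ancL_antisymm {L : List V} {u v : V} (h1 : ancL L u v) (h2 : ancL L v u) : u = v := by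
  rcases h1 with rfl | ⟨hu, h1⟩
  · rfl
  rcases h2 with rfl | ⟨hv, h2⟩
  · rfl
  exact absurd (h1.trans h2) (lt_irrefl _)

lemma ancL_trans {L : List V} {u v w : V} (h1 : ancL L u v) (h2 : ancL L v w) :
    ancL L u w := by
  rcases h1 with rfl | ⟨hu, h1⟩
  · exact h2
  rcases h2 with rfl | ⟨hv, h2⟩
  · exact Or.inr ⟨hu, h1⟩
  · exact Or.inr ⟨hu, h1.trans h2⟩

lemma ancL_total_of_mem {L : List V} {u v : V} (hu : u ∈ L) (hv : v ∈ L) :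
    ancL L u v ∨ ancL L v u := by
  rcases lt_trichotomy (L.idxOf u) (L.idxOf v) with h | h | h
  · exact Or.inl (Or.inr ⟨hu, h⟩)
  · exact Or.inl (Or.inl (eq_of_indexOf_eq hu h))
  · exact Or.inr (Or.inr ⟨hv, h⟩)

lemma ancL_chain {L : List V} {u v w : V} (h1 : ancL L u w) (h2 : ancL L v w) :
    ancL L u v ∨ ancL L v u := by
  rcases h1 with rfl | ⟨hu, h1⟩
  · exact Or.inr h2
  rcases h2 with rfl | ⟨hv, h2⟩
  · exact Or.inl (Or.inr ⟨hu, h1⟩)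
  · exact ancL_total_of_mem hu hv

/-- validity of a spine list encoding w.r.t. a 2-coloring `s` of a complete bipartite graph -/
structure Ok (s : V → Bool) (L : List V) : Prop where
  ne : L ≠ []
  nd : L.Nodup
  compl : ∀ u v, u ∉ L → v ∉ L → s u = s v
  suff : ∀ v ∈ L, (∀ w, ancL L v w → w = v) ∨
    (∃ a, ancL L v a ∧ ∃ b, ancL L v b ∧ s a ≠ s b)

lemma indexOf_head {L : List V} (hne : L ≠ []) : L.idxOf (L.head hne) = 0 := by
  cases L with
  | nil => exact absurd rfl hne
  | cons x t => simp

section Graph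

variable {G : SimpleGraph V} {s : V → Bool}

lemma connected_singleton (v : V) : (G.induce {w | w = v}).Connected := by
  haveI : Nonempty ({w | w = v} : Set V) := ⟨⟨v, rfl⟩⟩
  refine ⟨fun a b => ?_⟩
  have : a = b := Subtype.ext (a.2.trans b.2.symm)
  rw [this]

lemma connected_mixed (hG : ∀ u v, G.Adj u v ↔ s u ≠ s v) {S : Set V} (hm : ∃ a ∈ S, ∃ b ∈ S, s a ≠ s b) :
    (G.induce S).Connected := by
  obtain ⟨a, ha, b, hb, hab⟩ := hm
  haveI : Nonempty S := ⟨⟨a, ha⟩⟩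
  refine ⟨fun x y => ?_⟩
  by_cases hxy : s x.1 = s y.1
  · -- go through a or b
    obtain ⟨c, hc, hcx⟩ : ∃ c, c ∈ S ∧ s c ≠ s x.1 := by
      by_cases hax : s a = s x.1
      · exact ⟨b, hb, fun h => hab (hax.trans h.symm)⟩
      · exact ⟨a, ha, hax⟩
    have h1 : (G.induce S).Adj x ⟨c, hc⟩ := (hG x.1 c).2 (fun h => hcx h.symm)
    have h2 : (G.induce S).Adj ⟨c, hc⟩ y := (hG c y.1).2 (fun h => hcx (h.trans hxy.symm))
    exact (h1.reachable).trans h2.reachable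
  · have h : (G.induce S).Adj x y := (hG x.1 y.1).2 hxy
    exact h.reachable

lemma pure_side_subsingleton (hG : ∀ u v, G.Adj u v ↔ s u ≠ s v) {S : Set V} (hc : (G.induce S).Preconnected)
    (hp : ∀ a ∈ S, ∀ b ∈ S, s a = s b) : ∀ a ∈ S, ∀ b ∈ S, a = b := by
  intro a ha b hb
  obtain ⟨w⟩ := hc ⟨a, ha⟩ ⟨b, hb⟩
  cases w with
  | nil => rfl
  | @cons _ c _ h p =>
    exact absurd (hp _ ha _ c.2) ((hG a c.1).1 h)

/-- the search tree determined by a valid spine list -/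
def mk (hG : ∀ u v, G.Adj u v ↔ s u ≠ s v) (L : List V) (hOk : Ok s L) : SearchTree G where
  anc := ancL L
  refl := ancL_refl L
  antisymm := fun _ _ => ancL_antisymm
  trans := fun _ _ _ => ancL_trans
  chain := fun _ _ _ => ancL_chain
  root := by
    refine ⟨L.head hOk.ne, fun v => ?_⟩
    have hmem : L.head hOk.ne ∈ L := List.head_mem hOk.ne
    have hidx : L.idxOf (L.head hOk.ne) = 0 := indexOf_head hOk.ne
    by_cases hv : v = L.head hOk.ne
    · exact Or.inl hv.symm
    · refine Or.inr ⟨hmem, ?_⟩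
      rw [hidx]
      refine Nat.pos_of_ne_zero fun h0 => hv ?_
      by_cases hvL : v ∈ L
      · exact eq_of_indexOf_eq hvL (h0.trans hidx.symm)
      · exfalso
        have := List.idxOf_eq_length_iff.2 hvL
        rw [h0] at this
        exact hOk.ne (List.length_eq_zero_iff.1 this.symm)
  edge_comparable := by
    intro u v hadj
    have hsuv : s u ≠ s v := (hG u v).1 hadj
    by_cases hu : u ∈ L
    · by_cases hv : v ∈ L
      · exact ancL_total_of_mem hu hv
      · exact Or.inl (ancL_of_mem_of_not_mem hu hv)
    · by_cases hv : v ∈ L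
      · exact Or.inr (ancL_of_mem_of_not_mem hv hu)
      · exact absurd (hOk.compl u v hu hv) hsuv
  desc_connected := by
    intro v
    by_cases hv : v ∈ L
    · rcases hOk.suff v hv with h | h
      · have : {u | ancL L v u} = {w | w = v} := by
          ext w; exact ⟨fun hw => h w hw, fun hw => hw ▸ ancL_refl L v⟩
        rw [this]; exact connected_singleton v
      · obtain ⟨a, ha, b, hb, hab⟩ := h
        exact connected_mixed hG ⟨a, ha, b, hb, hab⟩
    · have : {u | ancL L v u} = {w | w = v} := by
        ext w
        simp only [Set.mem_setOf_eq, ancL_of_not_mem hv]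
        exact ⟨Eq.symm, Eq.symm⟩
      rw [this]; exact connected_singleton v

lemma mk_anc (L : List V) (hOk : Ok s L) (u v : V) :
    (mk (G := G) hG L hOk).anc u v ↔ ancL L u v := Iff.rfl

end Graph

/-- Key structural lemma: the descendants of a spine member. -/
lemma ancL_middle {A B : List V} {v : V} (hnd : (A ++ v :: B).Nodup) (w : V) :
    ancL (A ++ v :: B) v w ↔ (w = v ∨ w ∈ B ∨ w ∉ A ++ v :: B) := by
  have hvA : v ∉ A := by
    intro hvA
    have := List.Nodup.of_append_right (l₁ := A) (by simpa using hnd)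
    rw [List.nodup_append] at hnd
    exact hnd.2.2 v hvA v List.mem_cons_self rfl
  have hidxv : (A ++ v :: B).idxOf v = A.length := by
    rw [List.idxOf_append_of_notMem hvA, List.idxOf_cons_self]
    omega
  rw [List.nodup_append] at hnd
  obtain ⟨hndA, hndvB, hdisj⟩ := hnd
  have hvB : v ∉ B := (List.nodup_cons.1 hndvB).1
  constructor
  · rintro (rfl | ⟨hv, hlt⟩)
    · exact Or.inl rfl
    by_cases hw : w ∈ A ++ v :: B
    · rcases List.mem_append.1 hw with hwA | hwB
      · exfalso
        have : (A ++ v :: B).idxOf w < A.length := by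
          rw [List.idxOf_append_of_mem hwA]
          exact List.idxOf_lt_length_iff.2 hwA
        omega
      · rcases List.mem_cons.1 hwB with rfl | hwB
        · exact Or.inl rfl
        · exact Or.inr (Or.inl hwB)
    · exact Or.inr (Or.inr hw)
  · intro h
    rcases h with rfl | hwB | hw
    · exact ancL_refl _ _
    · refine Or.inr ⟨List.mem_append.2 (Or.inr (List.mem_cons_self)), ?_⟩
      have hwv : w ≠ v := fun h => hvB (h ▸ hwB)
      have hwA : w ∉ A := fun hwA => hdisj w hwA w (List.mem_cons.2 (Or.inr hwB)) rfl
      have : (A ++ v :: B).idxOf w = A.length + B.idxOf w + 1 := by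
        rw [List.idxOf_append_of_notMem hwA, List.idxOf_cons_ne _ (Ne.symm hwv)]
        omega
      omega
    · refine Or.inr ⟨List.mem_append.2 (Or.inr (List.mem_cons_self)), ?_⟩
      rw [List.idxOf_eq_length_iff.2 hw]
      have := List.idxOf_lt_length_iff.2 (List.mem_append.2 (Or.inr (List.mem_cons_self)) : v ∈ A ++ v :: B)
      omega

end KPQ

namespace KPQ
set_option linter.unusedSectionVars false

variable {V : Type} [DecidableEq V] [Fintype V]

section Classify

variable {G : SimpleGraph V} {s : V → Bool}

lemma pairwise_of_idx {r : V → V → Prop} {l : List V} (h : l.Pairwise r) {u v : V}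
    (hu : u ∈ l) (hv : v ∈ l) (hlt : l.idxOf u < l.idxOf v) : r u v := by
  have hu' := List.idxOf_lt_length_iff.2 hu
  have hv' := List.idxOf_lt_length_iff.2 hv
  have := (List.pairwise_iff_get.1 h) ⟨_, hu'⟩ ⟨_, hv'⟩ hlt
  simpa [List.get_eq_getElem, List.getElem_idxOf] using this

lemma exists_chain_list (T : SearchTree G) (S : Finset V)
    (hS : ∀ u ∈ S, ∀ v ∈ S, T.anc u v ∨ T.anc v u) :
    ∃ l : List V, l.Nodup ∧ (∀ v, v ∈ l ↔ v ∈ S) ∧ l.Pairwise T.anc := by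
  classical
  induction S using Finset.strongInductionOn with
  | _ S ih =>
  rcases S.eq_empty_or_nonempty with rfl | hne
  · exact ⟨[], List.nodup_nil, by simp, List.Pairwise.nil⟩
  · set key : V → ℕ := fun v => (Finset.univ.filter (fun u => T.anc u v)).card with hkey
    have key_lt : ∀ u v, T.anc u v → u ≠ v → key u < key v := by
      intro u v huv hne'
      apply Finset.card_lt_card
      constructor
      · intro w hw
        simp only [Finset.mem_filter, Finset.mem_univ, true_and] at hw ⊢
        exact T.trans _ _ _ hw huv
      · intro hsub
        have : v ∈ Finset.univ.filter (fun u => T.anc u v) := by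
          simp [T.refl v]
        have hv := hsub this
        simp only [Finset.mem_filter, Finset.mem_univ, true_and] at hv
        exact hne' (T.antisymm _ _ huv hv)
    obtain ⟨m, hm, hmax⟩ := S.exists_max_image key hne
    have hsub : S.erase m ⊂ S := Finset.erase_ssubset hm
    obtain ⟨l', hnd', hmem', hpw'⟩ := ih _ hsub
      (fun u hu v hv => hS u (Finset.mem_of_mem_erase hu) v (Finset.mem_of_mem_erase hv))
    refine ⟨l' ++ [m], ?_, ?_, ?_⟩
    · rw [List.nodup_append]
      refine ⟨hnd', List.nodup_singleton m, ?_⟩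
      intro a ha b hb hab
      subst hab
      rw [List.mem_singleton] at hb
      subst hb
      exact (Finset.notMem_erase a S) ((hmem' a).1 ha)
    · intro v
      rw [List.mem_append, List.mem_singleton, hmem' v, Finset.mem_erase]
      constructor
      · rintro (⟨_, h⟩ | rfl) <;> assumption
      · intro hv
        by_cases hvm : v = m
        · exact Or.inr hvm
        · exact Or.inl ⟨hvm, hv⟩
    · rw [List.pairwise_append]
      refine ⟨hpw', List.pairwise_singleton _ _, ?_⟩
      intro a ha b hb
      rw [List.mem_singleton] at hb
      rw [hb]
      have haS := (hmem' a).1 ha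
      have haSm := Finset.mem_of_mem_erase haS
      rcases hS a haSm m hm with h | h
      · exact h
      · by_cases ham : a = m
        · exact ham ▸ T.refl a
        · exact absurd (hmax a haSm) (Nat.not_le.2 (key_lt m a h (Ne.symm ham)))

theorem classify (hG : ∀ u v, G.Adj u v ↔ s u ≠ s v) (T : SearchTree G) :
    ∃ (L : List V) (hOk : Ok s L), T = mk hG L hOk := by
  classical
  set C : Set V := {v | ∀ w, T.anc v w ∨ T.anc w v} with hC
  have notC_desc : ∀ u, u ∉ C → ∀ w, T.anc u w → w = u := by
    intro u hu w huw
    have hz : ∃ z, ¬ T.anc u z ∧ ¬ T.anc z u := by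
      by_contra h
      push_neg at h
      exact hu (fun z => by
        by_cases h1 : T.anc u z
        · exact Or.inl h1
        · exact Or.inr (h z h1))
    obtain ⟨z, hz1, hz2⟩ := hz
    have hsz : s u = s z := by
      by_contra h
      rcases T.edge_comparable u z ((hG u z).2 h) with h' | h'
      · exact hz1 h'
      · exact hz2 h'
    have hcross : ∀ x, T.anc u x → s x = s u := by
      intro x hux
      by_contra hx
      have hxz : s x ≠ s z := fun h => hx (h.trans hsz.symm)
      rcases T.edge_comparable x z ((hG x z).2 hxz) with h' | h'
      · exact hz1 (T.trans _ _ _ hux h')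
      · rcases T.chain u z x hux h' with h'' | h''
        · exact hz1 h''
        · exact hz2 h''
    have hpure : ∀ a ∈ {w | T.anc u w}, ∀ b ∈ {w | T.anc u w}, s a = s b := by
      intro a ha b hb
      rw [hcross a ha, hcross b hb]
    exact pure_side_subsingleton hG (T.desc_connected u).preconnected hpure
      w huw u (T.refl u)
  have C_above : ∀ c ∈ C, ∀ u, u ∉ C → T.anc c u := by
    intro c hc u hu
    rcases hc u with h | h
    · exact h
    · have := notC_desc u hu c h
      subst this
      exact absurd hc hu
  have compl_side : ∀ u v, u ∉ C → v ∉ C → s u = s v := by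
    intro u v hu hv
    by_contra h
    rcases T.edge_comparable u v ((hG u v).2 h) with h' | h'
    · exact h ((notC_desc u hu v h') ▸ rfl)
    · exact h ((notC_desc v hv u h') ▸ rfl)
  set Cfin : Finset V := Finset.univ.filter (fun v => v ∈ C) with hCfin
  have hCfin_mem : ∀ v, v ∈ Cfin ↔ v ∈ C := by
    intro v; simp [hCfin]
  obtain ⟨l, hnd, hmem, hpw⟩ := exists_chain_list T Cfin
    (fun u hu v hv => ((hCfin_mem u).1 hu) v)
  have hmemC : ∀ v, v ∈ l ↔ v ∈ C := fun v => (hmem v).trans (hCfin_mem v)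
  have anc_eq : ∀ u v, T.anc u v ↔ ancL l u v := by
    intro u v
    by_cases hu : u ∈ l
    · by_cases hv : v ∈ l
      · constructor
        · intro h
          by_cases huv : u = v
          · exact Or.inl huv
          rcases lt_trichotomy (l.idxOf u) (l.idxOf v) with hlt | heq | hgt
          · exact Or.inr ⟨hu, hlt⟩
          · exact absurd (eq_of_indexOf_eq hu heq) huv
          · exact absurd (T.antisymm _ _ h (pairwise_of_idx hpw hv hu hgt)) huv
        · rintro (rfl | ⟨_, hlt⟩)
          · exact T.refl u
          · exact pairwise_of_idx hpw hu hv hlt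
      · exact iff_of_true (C_above u ((hmemC u).1 hu) v (fun h => hv ((hmemC v).2 h)))
          (ancL_of_mem_of_not_mem hu hv)
    · have hu' : u ∉ C := fun h => hu ((hmemC u).2 h)
      rw [ancL_of_not_mem hu]
      constructor
      · intro h; exact (notC_desc u hu' v h).symm
      · rintro rfl; exact T.refl u
  have hOk : Ok s l := by
    constructor
    · obtain ⟨r, hr⟩ := T.root
      have : r ∈ l := (hmemC r).2 (fun w => Or.inl (hr w))
      exact List.ne_nil_of_mem this
    · exact hnd
    · intro u v hu hv
      exact compl_side u v (fun h => hu ((hmemC u).2 h)) (fun h => hv ((hmemC v).2 h))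
    · intro v hv
      by_cases hmix : ∃ a, ancL l v a ∧ ∃ b, ancL l v b ∧ s a ≠ s b
      · exact Or.inr hmix
      · push_neg at hmix
        left
        intro w hw
        have hset : {u | T.anc v u} = {w | ancL l v w} := Set.ext fun w => anc_eq v w
        have hconn := (T.desc_connected v).preconnected
        rw [hset] at hconn
        exact pure_side_subsingleton hG hconn
          (fun a ha b hb => hmix a ha b hb) w hw v (ancL_refl l v)
  exact ⟨l, hOk, SearchTree.ext' anc_eq⟩

end Classify

end KPQ

namespace KPQ
set_option linter.unusedSectionVars false

variable {V : Type} [DecidableEq V] [Fintype V]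

/-- transfer of `ancL v ·` across two lists in which `v` has equivalent tails -/
lemma ancL_iff_of_split {A M A' M' : List V} {v : V} (hnd : (A ++ v :: M).Nodup)
    (hnd' : (A' ++ v :: M').Nodup)
    (hML : ∀ w, (w ∈ M ∨ w ∉ A ++ v :: M) ↔ (w ∈ M' ∨ w ∉ A' ++ v :: M')) (w : V) :
    ancL (A' ++ v :: M') v w ↔ ancL (A ++ v :: M) v w := by
  rw [ancL_middle hnd', ancL_middle hnd]
  have h1 := hML w
  tauto

lemma suff_transfer {L L' : List V} {v : V} {s : V → Bool}
    (hiff : ∀ w, ancL L' v w ↔ ancL L v w)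
    (h : (∀ w, ancL L v w → w = v) ∨ (∃ a, ancL L v a ∧ ∃ b, ancL L v b ∧ s a ≠ s b)) :
    (∀ w, ancL L' v w → w = v) ∨ (∃ a, ancL L' v a ∧ ∃ b, ancL L' v b ∧ s a ≠ s b) := by
  rcases h with h | ⟨a, ha, b, hb, hab⟩
  · exact Or.inl fun w hw => h w ((hiff w).1 hw)
  · exact Or.inr ⟨a, (hiff a).2 ha, b, (hiff b).2 hb, hab⟩

section Moves

variable {G : SimpleGraph V} {s : V → Bool}

lemma adj_of (hG : ∀ u v, G.Adj u v ↔ s u ≠ s v) {L L' : List V} (hOk : Ok s L)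
    (hOk' : Ok s L') (a b : V) (hab : a ≠ b) (hanc : ancL L a b)
    (hb : ∀ w, ancL L' b w ↔ ancL L a w)
    (hoth : ∀ v, v ≠ a → v ≠ b → ∀ w, ancL L' v w ↔ ancL L v w) :
    (rotationGraph G).Adj (mk hG L hOk) (mk hG L' hOk') := by
  refine ⟨a, b, hab, hanc, Set.ext fun w => hb w, fun v hv1 hv2 => Set.ext fun w => hoth v hv1 hv2 w⟩

/-! ### Move 1 : swapping two adjacent spine vertices -/

section Swap
variable (A B : List V) (u x : V)

lemma swap_mem (w : V) : w ∈ A ++ u :: x :: B ↔ w ∈ A ++ x :: u :: B := by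
  simp only [List.mem_append, List.mem_cons]; tauto

lemma swap_nodup (hnd : (A ++ u :: x :: B).Nodup) : (A ++ x :: u :: B).Nodup :=
  (((List.Perm.swap x u B).append_left A).nodup_iff).1 hnd

lemma swap_ne (hnd : (A ++ u :: x :: B).Nodup) : u ≠ x := by
  have h := List.Nodup.of_append_right (l₁ := A) hnd
  rw [List.nodup_cons] at h
  exact fun h' => h.1 (h' ▸ List.mem_cons_self)

lemma swap_anc_b (hnd : (A ++ u :: x :: B).Nodup) (w : V) :
    ancL (A ++ x :: u :: B) x w ↔ ancL (A ++ u :: x :: B) u w := by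
  rw [ancL_middle (swap_nodup A B u x hnd), ancL_middle hnd]
  have hm := swap_mem A B u x w
  have hne := swap_ne A B u x hnd
  simp only [List.mem_cons] at *
  constructor
  · rintro (rfl | h | h)
    · exact Or.inr (Or.inl (Or.inl rfl))
    · rcases h with rfl | h
      · exact Or.inl rfl
      · exact Or.inr (Or.inl (Or.inr h))
    · exact Or.inr (Or.inr (fun hw => h (((swap_mem A B u x w).1 hw))))
  · rintro (rfl | h | h)
    · exact Or.inr (Or.inl (Or.inl rfl))
    · rcases h with rfl | h
      · exact Or.inl rfl
      · exact Or.inr (Or.inl (Or.inr h))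
    · exact Or.inr (Or.inr (fun hw => h (((swap_mem A B u x w).2 hw))))

lemma swap_anc_a (hnd : (A ++ u :: x :: B).Nodup) (w : V) :
    ancL (A ++ x :: u :: B) u w ↔ (ancL (A ++ u :: x :: B) u w ∧ w ≠ x) := by
  have hnd' := swap_nodup A B u x hnd
  have hxu := swap_ne A B u x hnd
  have hxB : x ∉ B := by
    have h := List.Nodup.of_append_right (l₁ := A) hnd
    rw [List.nodup_cons] at h
    exact fun hc => (List.nodup_cons.1 h.2).1 hc
  have e1 : A ++ x :: u :: B = (A ++ [x]) ++ u :: B := by simp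
  have hnd2 : ((A ++ [x]) ++ u :: B).Nodup := by rw [← e1]; exact hnd'
  have hm' : ∀ y, y ∈ (A ++ [x]) ++ u :: B ↔ y ∈ A ++ u :: x :: B := by
    intro y
    rw [← e1]
    exact (swap_mem A B u x y).symm
  have hxm : x ∈ A ++ u :: x :: B := by simp
  constructor
  · intro h
    rw [e1] at h
    rw [ancL_middle hnd2] at h
    rw [ancL_middle hnd]
    rcases h with rfl | h | h
    · exact ⟨Or.inl rfl, hxu⟩
    · exact ⟨Or.inr (Or.inl (List.mem_cons_of_mem x h)), fun hc => hxB (hc ▸ h)⟩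
    · have hw : w ∉ A ++ u :: x :: B := fun hc => h ((hm' w).2 hc)
      exact ⟨Or.inr (Or.inr hw), fun hc => hw (hc ▸ hxm)⟩
  · rintro ⟨h, hwx⟩
    rw [ancL_middle hnd] at h
    rw [e1, ancL_middle hnd2]
    rcases h with rfl | h | h
    · exact Or.inl rfl
    · rcases List.mem_cons.1 h with rfl | h
      · exact absurd rfl hwx
      · exact Or.inr (Or.inl h)
    · exact Or.inr (Or.inr fun hc => h ((hm' w).1 hc))

lemma swap_anc_other (hnd : (A ++ u :: x :: B).Nodup) {v : V} (hvu : v ≠ u) (hvx : v ≠ x)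
    (w : V) : ancL (A ++ x :: u :: B) v w ↔ ancL (A ++ u :: x :: B) v w := by
  have hnd' := swap_nodup A B u x hnd
  by_cases hv : v ∈ A ++ u :: x :: B
  · rcases List.mem_append.1 hv with hvA | hvT
    · obtain ⟨A1, A2, rfl⟩ := List.append_of_mem hvA
      have e1 : (A1 ++ v :: A2) ++ u :: x :: B = A1 ++ v :: (A2 ++ u :: x :: B) := by simp
      have e2 : (A1 ++ v :: A2) ++ x :: u :: B = A1 ++ v :: (A2 ++ x :: u :: B) := by simp
      rw [e1] at hnd; rw [e2] at hnd'
      rw [e1, e2]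
      refine ancL_iff_of_split hnd hnd' (fun w => ?_) w
      have h2 : w ∈ A1 ++ v :: (A2 ++ u :: x :: B) ↔ w ∈ A1 ++ v :: (A2 ++ x :: u :: B) := by
        rw [← e1, ← e2]; exact swap_mem _ B u x w
      exact or_congr (swap_mem A2 B u x w) (not_congr h2)
    · have hvB : v ∈ B := by
        rcases List.mem_cons.1 hvT with rfl | hvT
        · exact absurd rfl hvu
        rcases List.mem_cons.1 hvT with rfl | hvT
        · exact absurd rfl hvx
        · exact hvT
      obtain ⟨B1, B2, rfl⟩ := List.append_of_mem hvB
      have e1 : A ++ u :: x :: (B1 ++ v :: B2) = (A ++ u :: x :: B1) ++ v :: B2 := by simp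
      have e2 : A ++ x :: u :: (B1 ++ v :: B2) = (A ++ x :: u :: B1) ++ v :: B2 := by simp
      rw [e1] at hnd; rw [e2] at hnd'
      rw [e1, e2]
      refine ancL_iff_of_split hnd hnd' (fun w => ?_) w
      have h2 : w ∈ A ++ u :: x :: (B1 ++ v :: B2) ↔ w ∈ A ++ x :: u :: (B1 ++ v :: B2) :=
        swap_mem _ _ u x w
      rw [e1, e2] at h2
      exact or_congr Iff.rfl (not_congr h2)
  · have hv' : v ∉ A ++ x :: u :: B := fun h => hv ((swap_mem A B u x v).2 h)
    rw [ancL_of_not_mem hv, ancL_of_not_mem hv']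

lemma move_swap (hG : ∀ u v, G.Adj u v ↔ s u ≠ s v) (hOk : Ok s (A ++ u :: x :: B))
    (hux : s u ≠ s x)
    (hval : ∃ w', (w' ∈ B ∨ w' ∉ A ++ u :: x :: B) ∧ s w' ≠ s u) :
    ∃ h' : Ok s (A ++ x :: u :: B),
      (rotationGraph G).Adj (mk hG _ hOk) (mk hG _ h') := by
  have hnd := hOk.nd
  have hnd' := swap_nodup A B u x hnd
  have hxu := swap_ne A B u x hnd
  have hmemL : u ∈ A ++ u :: x :: B := by simp
  have h' : Ok s (A ++ x :: u :: B) := by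
    constructor
    · simp
    · exact hnd'
    · intro a b ha hb
      exact hOk.compl a b (fun h => ha ((swap_mem A B u x a).1 h))
        (fun h => hb ((swap_mem A B u x b).1 h))
    · intro v hv
      by_cases hvu : v = u
      · subst hvu
        right
        obtain ⟨w', hw', hsw⟩ := hval
        refine ⟨v, ancL_refl _ _, w', ?_, fun h => hsw h.symm⟩
        have e1 : A ++ x :: v :: B = (A ++ [x]) ++ v :: B := by simp
        rw [e1, ancL_middle (by rw [← e1]; exact hnd')]
        rcases hw' with h | h
        · exact Or.inr (Or.inl h)
        · exact Or.inr (Or.inr (fun hc => h ((swap_mem A B v x w').2 (by rw [e1]; exact hc))))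
      · by_cases hvx : v = x
        · subst hvx
          right
          refine ⟨u, ?_, v, ancL_refl _ _, hux⟩
          rw [swap_anc_b A B u v hnd]
          exact ancL_refl _ _
        · have hvL : v ∈ A ++ u :: x :: B := (swap_mem A B u x v).2 hv
          exact suff_transfer (swap_anc_other A B u x hnd hvu hvx) (hOk.suff v hvL)
  refine ⟨h', adj_of hG hOk h' u x hxu ?_ (swap_anc_b A B u x hnd)
    (fun v h1 h2 w => swap_anc_other A B u x hnd h1 h2 w)⟩
  rw [ancL_middle hnd]
  exact Or.inr (Or.inl (List.mem_cons_self))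

end Swap

end Moves

end KPQ

namespace KPQ
set_option linter.unusedSectionVars false
set_option maxHeartbeats 1000000

variable {V : Type} [DecidableEq V] [Fintype V]

section Moves2

variable {G : SimpleGraph V} {s : V → Bool}

/-! ### Move 2 : pulling a pooled vertex `f` just above the last spine vertex `u` -/

section Pull
variable (A : List V) (u f : V)

lemma pull_nodup (hnd : (A ++ [u]).Nodup) (hf : f ∉ A ++ [u]) : (A ++ [f, u]).Nodup := by
  have : (A ++ [f, u] : List V) = A ++ f :: [u] := rfl
  rw [this, List.Perm.nodup_iff (List.perm_middle)]
  exact List.nodup_cons.2 ⟨hf, hnd⟩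

lemma pull_anc_b (hnd : (A ++ [u]).Nodup) (hf : f ∉ A ++ [u]) (w : V) :
    ancL (A ++ [f, u]) f w ↔ ancL (A ++ [u]) u w := by
  have hnd' := pull_nodup A u f hnd hf
  have hfA : f ∉ A := fun h => hf (by simp [h])
  have hfu : f ≠ u := fun h => hf (by simp [h])
  have huA : u ∉ A := by
    rw [List.nodup_append] at hnd
    exact fun h => hnd.2.2 _ h _ (by simp) rfl
  rw [show (A ++ [f, u] : List V) = A ++ f :: [u] from rfl, ancL_middle hnd',
    show (A ++ [u] : List V) = A ++ u :: [] from rfl, ancL_middle hnd]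
  by_cases h1 : w = f <;> by_cases h2 : w = u <;> by_cases h3 : w ∈ A <;>
    simp_all [List.mem_append, List.mem_cons]

lemma pull_anc_a (hnd : (A ++ [u]).Nodup) (hf : f ∉ A ++ [u]) (w : V) :
    ancL (A ++ [f, u]) u w ↔ (ancL (A ++ [u]) u w ∧ w ≠ f) := by
  have hnd' := pull_nodup A u f hnd hf
  have hfA : f ∉ A := fun h => hf (by simp [h])
  have hfu : f ≠ u := fun h => hf (by simp [h])
  have huA : u ∉ A := by
    rw [List.nodup_append] at hnd
    exact fun h => hnd.2.2 _ h _ (by simp) rfl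
  rw [show (A ++ [f, u] : List V) = (A ++ [f]) ++ u :: [] by simp,
    ancL_middle (by simpa using hnd'),
    show (A ++ [u] : List V) = A ++ u :: [] from rfl, ancL_middle hnd]
  by_cases h1 : w = f <;> by_cases h2 : w = u <;> by_cases h3 : w ∈ A <;>
    simp_all [List.mem_append, List.mem_cons]

lemma pull_anc_other (hnd : (A ++ [u]).Nodup) (hf : f ∉ A ++ [u]) {v : V} (hvu : v ≠ u)
    (hvf : v ≠ f) (w : V) : ancL (A ++ [f, u]) v w ↔ ancL (A ++ [u]) v w := by
  have hnd' := pull_nodup A u f hnd hf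
  by_cases hvA : v ∈ A
  · obtain ⟨A1, A2, rfl⟩ := List.append_of_mem hvA
    have hfA1 : f ∉ A1 := fun h => hf (by simp [h])
    have hfA2 : f ∉ A2 := fun h => hf (by simp [h])
    have hfv : f ≠ v := fun h => hf (by simp [h])
    have hfu2 : f ≠ u := fun h => hf (by simp [h])
    have e1 : (A1 ++ v :: A2) ++ [u] = A1 ++ v :: (A2 ++ [u]) := by simp
    have e2 : (A1 ++ v :: A2) ++ [f, u] = A1 ++ v :: (A2 ++ [f, u]) := by simp
    rw [e1] at hnd; rw [e2] at hnd'
    rw [e1, e2]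
    refine ancL_iff_of_split hnd hnd' (fun w => ?_) w
    by_cases h1 : w = f <;>
      simp_all [List.mem_append, List.mem_cons]
  · have hv1 : v ∉ A ++ [u] := by
      simp only [List.mem_append, List.mem_singleton]
      rintro (h | h)
      · exact hvA h
      · exact hvu h
    have hv2 : v ∉ A ++ [f, u] := by
      simp only [List.mem_append, List.mem_cons, List.mem_singleton, List.not_mem_nil, or_false]
      rintro (h | h | h)
      · exact hvA h
      · exact hvf h
      · exact hvu h
    rw [ancL_of_not_mem hv1, ancL_of_not_mem hv2]

lemma move_pull (hG : ∀ u v, G.Adj u v ↔ s u ≠ s v) (hOk : Ok s (A ++ [u]))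
    (hf : f ∉ A ++ [u]) (hfu : s f ≠ s u) :
    ∃ h' : Ok s (A ++ [f, u]),
      (rotationGraph G).Adj (mk hG _ hOk) (mk hG _ h') := by
  have hnd := hOk.nd
  have hnd' := pull_nodup A u f hnd hf
  have huf : u ≠ f := fun h => hf (h ▸ (by simp : u ∈ A ++ [u]))
  have hmem2 : ∀ y, y ∈ A ++ [f, u] ↔ (y ∈ A ++ [u] ∨ y = f) := by
    intro y
    simp only [List.mem_append, List.mem_cons, List.mem_singleton, List.not_mem_nil, or_false]
    tauto
  have h' : Ok s (A ++ [f, u]) := by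
    constructor
    · simp
    · exact hnd'
    · intro a b ha hb
      refine hOk.compl a b (fun h => ha ((hmem2 a).2 (Or.inl h)))
        (fun h => hb ((hmem2 b).2 (Or.inl h)))
    · intro v hv
      by_cases hvf : v = f
      · subst hvf
        right
        refine ⟨u, ?_, v, ancL_refl _ _, fun h => hfu h.symm⟩
        rw [pull_anc_b A u v hnd hf]
        exact ancL_refl _ _
      · by_cases hvu : v = u
        · subst hvu
          by_cases hg : ∃ g, g ∉ A ++ [f, v]
          · obtain ⟨g, hg⟩ := hg
            right
            have hgL : g ∉ A ++ [v] := fun h => hg ((hmem2 g).2 (Or.inl h))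
            have hgf : g ≠ f := fun h => hg ((hmem2 g).2 (Or.inr h))
            refine ⟨v, ancL_refl _ _, g, ?_, ?_⟩
            · rw [pull_anc_a A v f hnd hf]
              exact ⟨ancL_of_mem_of_not_mem (by simp) hgL, hgf⟩
            · have := hOk.compl g f hgL hf
              exact fun h => hfu (this ▸ h).symm
          · push_neg at hg
            left
            intro w hw
            rw [pull_anc_a A v f hnd hf] at hw
            obtain ⟨hw1, hw2⟩ := hw
            rw [show (A ++ [v] : List V) = A ++ v :: [] from rfl, ancL_middle hnd] at hw1
            rcases hw1 with rfl | h | h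
            · rfl
            · exact absurd h List.not_mem_nil
            · exfalso
              rcases (hmem2 w).1 (hg w) with h2 | h2
              · exact h h2
              · exact hw2 h2
        · have hvL : v ∈ A ++ [u] := by
            rcases (hmem2 v).1 hv with h | h
            · exact h
            · exact absurd h hvf
          exact suff_transfer (pull_anc_other A u f hnd hf hvu hvf) (hOk.suff v hvL)
  refine ⟨h', adj_of hG hOk h' u f huf
    (ancL_of_mem_of_not_mem (by simp) hf)
    (pull_anc_b A u f hnd hf)
    (fun v h1 h2 w => pull_anc_other A u f hnd hf h1 h2 w)⟩

end Pull

end Moves2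

end KPQ

namespace KPQ
set_option linter.unusedSectionVars false
set_option maxHeartbeats 1000000

variable {V : Type} [DecidableEq V] [Fintype V]

section Moves3

variable {G : SimpleGraph V} {s : V → Bool}

/-! ### Move 3 : the next-to-last spine vertex `c` drops into the pool -/

section Eat
variable (A : List V) (c z : V)

lemma eat_nodup (hnd : (A ++ [c, z]).Nodup) : (A ++ [z]).Nodup :=
  ((List.sublist_cons_self c [z]).append_left A).nodup hnd

lemma eat_facts (hnd : (A ++ [c, z]).Nodup) : c ∉ A ∧ z ∉ A ∧ c ≠ z := by
  rw [show (A ++ [c, z] : List V) = A ++ c :: [z] from rfl, List.nodup_append] at hnd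
  obtain ⟨-, h2, h3⟩ := hnd
  rw [List.nodup_cons] at h2
  refine ⟨fun h => h3 _ h _ (by simp) rfl, fun h => h3 _ h _ (by simp) rfl, fun h => h2.1 (by simp [h])⟩

lemma eat_anc_b (hnd : (A ++ [c, z]).Nodup) (t : V) :
    ancL (A ++ [z]) z t ↔ ancL (A ++ [c, z]) c t := by
  obtain ⟨hcA, hzA, hcz⟩ := eat_facts A c z hnd
  rw [show (A ++ [z] : List V) = A ++ z :: [] from rfl, ancL_middle (eat_nodup A c z hnd),
    show (A ++ [c, z] : List V) = A ++ c :: [z] from rfl, ancL_middle hnd]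
  by_cases h1 : t = c <;> by_cases h2 : t = z <;> by_cases h3 : t ∈ A <;>
    simp_all [List.mem_append, List.mem_cons]

lemma eat_anc_other (hnd : (A ++ [c, z]).Nodup) {v : V} (hvc : v ≠ c) (hvz : v ≠ z) (t : V) :
    ancL (A ++ [z]) v t ↔ ancL (A ++ [c, z]) v t := by
  obtain ⟨hcA, hzA, hcz⟩ := eat_facts A c z hnd
  have hnd' := eat_nodup A c z hnd
  by_cases hvA : v ∈ A
  · obtain ⟨A1, A2, rfl⟩ := List.append_of_mem hvA
    have hcA1 : c ∉ A1 := fun h => hcA (by simp [h])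
    have hcA2 : c ∉ A2 := fun h => hcA (by simp [h])
    have hzA1 : z ∉ A1 := fun h => hzA (by simp [h])
    have hzA2 : z ∉ A2 := fun h => hzA (by simp [h])
    have e1 : (A1 ++ v :: A2) ++ [c, z] = A1 ++ v :: (A2 ++ [c, z]) := by simp
    have e2 : (A1 ++ v :: A2) ++ [z] = A1 ++ v :: (A2 ++ [z]) := by simp
    rw [e1] at hnd; rw [e2] at hnd'
    rw [e1, e2]
    refine ancL_iff_of_split hnd hnd' (fun t => ?_) t
    by_cases h1 : t = c <;> by_cases h2 : t = z <;>
      simp_all [List.mem_append, List.mem_cons]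
  · have hv1 : v ∉ A ++ [c, z] := by
      simp only [List.mem_append, List.mem_cons, List.mem_singleton, List.not_mem_nil, or_false]
      rintro (h | h | h)
      · exact hvA h
      · exact hvc h
      · exact hvz h
    have hv2 : v ∉ A ++ [z] := by
      simp only [List.mem_append, List.mem_singleton]
      rintro (h | h)
      · exact hvA h
      · exact hvz h
    rw [ancL_of_not_mem hv2, ancL_of_not_mem hv1]

lemma move_eat (hG : ∀ u v, G.Adj u v ↔ s u ≠ s v) (hOk : Ok s (A ++ [c, z]))
    (hcz : s c ≠ s z) (hcs : ∀ y, y ∉ A ++ [c, z] → s y = s c) :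
    ∃ h' : Ok s (A ++ [z]),
      (rotationGraph G).Adj (mk hG _ hOk) (mk hG _ h') := by
  have hnd := hOk.nd
  obtain ⟨hcA, hzA, hcez⟩ := eat_facts A c z hnd
  have hnd' := eat_nodup A c z hnd
  have hcL' : c ∉ A ++ [z] := by
    simp only [List.mem_append, List.mem_singleton]
    rintro (h | h)
    · exact hcA h
    · exact hcez h
  have hmem : ∀ y, y ∉ A ++ [z] → (y = c ∨ y ∉ A ++ [c, z]) := by
    intro y hy
    by_cases h : y = c
    · exact Or.inl h
    · refine Or.inr (fun hc => hy ?_)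
      simp only [List.mem_append, List.mem_cons, List.mem_singleton, List.not_mem_nil,
        or_false] at hc
      rcases hc with h' | h' | h'
      · simp [h']
      · exact absurd h' h
      · simp [h']
  have h' : Ok s (A ++ [z]) := by
    constructor
    · simp
    · exact hnd'
    · intro a b ha hb
      have hsa : s a = s c := by
        rcases hmem a ha with h | h
        · rw [h]
        · exact hcs a h
      have hsb : s b = s c := by
        rcases hmem b hb with h | h
        · rw [h]
        · exact hcs b h
      rw [hsa, hsb]
    · intro v hv
      by_cases hvz : v = z
      · subst hvz
        right
        refine ⟨c, ?_, v, ancL_refl _ _, hcz⟩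
        rw [eat_anc_b A c v hnd]
        exact ancL_refl _ _
      · have hvc : v ≠ c := fun h => hcL' (h ▸ hv)
        have hvL : v ∈ A ++ [c, z] := by
          simp only [List.mem_append, List.mem_singleton] at hv
          rcases hv with h | h
          · simp [h]
          · simp [h]
        exact suff_transfer (fun w => eat_anc_other A c z hnd hvc hvz w) (hOk.suff v hvL)
  refine ⟨h', adj_of hG hOk h' c z hcez ?_ (eat_anc_b A c z hnd)
    (fun v h1 h2 w => eat_anc_other A c z hnd h1 h2 w)⟩
  rw [show (A ++ [c, z] : List V) = A ++ c :: [z] from rfl, ancL_middle hnd]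
  simp

end Eat

/-! ### Move 4 : double drop when the pool is empty -/

section Eat2
variable (A : List V) (c z y : V)

lemma eat2_nodup (hnd : (A ++ [c, z, y]).Nodup) : (A ++ [z]).Nodup := by
  refine List.Sublist.nodup ?_ hnd
  refine List.Sublist.append_left ?_ A
  exact ((List.nil_sublist [y]).cons₂ z).cons c

lemma eat2_facts (hnd : (A ++ [c, z, y]).Nodup) :
    c ∉ A ∧ z ∉ A ∧ y ∉ A ∧ c ≠ z ∧ c ≠ y ∧ z ≠ y := by
  rw [show (A ++ [c, z, y] : List V) = A ++ c :: z :: [y] from rfl, List.nodup_append] at hnd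
  obtain ⟨-, h2, h3⟩ := hnd
  rw [List.nodup_cons] at h2
  obtain ⟨hc, h2⟩ := h2
  rw [List.nodup_cons] at h2
  exact ⟨fun h => h3 _ h _ (by simp) rfl, fun h => h3 _ h _ (by simp) rfl, fun h => h3 _ h _ (by simp) rfl,
    fun h => hc (by simp [h]), fun h => hc (by simp [h]), fun h => h2.1 (by simp [h])⟩

lemma eat2_anc_b (hnd : (A ++ [c, z, y]).Nodup) (hfull : ∀ v, v ∈ A ++ [c, z, y]) (t : V) :
    ancL (A ++ [z]) z t ↔ ancL (A ++ [c, z, y]) c t := by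
  obtain ⟨hcA, hzA, hyA, hcz, hcy, hzy⟩ := eat2_facts A c z y hnd
  have ht := hfull t
  rw [show (A ++ [z] : List V) = A ++ z :: [] from rfl, ancL_middle (eat2_nodup A c z y hnd),
    show (A ++ [c, z, y] : List V) = A ++ c :: [z, y] from rfl, ancL_middle hnd]
  by_cases h1 : t = c <;> by_cases h2 : t = z <;> by_cases h3 : t = y <;>
    by_cases h4 : t ∈ A <;> simp_all [List.mem_append, List.mem_cons]

lemma eat2_anc_other (hnd : (A ++ [c, z, y]).Nodup) (hfull : ∀ v, v ∈ A ++ [c, z, y]) {v : V}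
    (hvc : v ≠ c) (hvz : v ≠ z) (t : V) :
    ancL (A ++ [z]) v t ↔ ancL (A ++ [c, z, y]) v t := by
  obtain ⟨hcA, hzA, hyA, hcz, hcy, hzy⟩ := eat2_facts A c z y hnd
  have hnd' := eat2_nodup A c z y hnd
  by_cases hvy : v = y
  · subst hvy
    have hv2 : v ∉ A ++ [z] := by
      simp only [List.mem_append, List.mem_singleton]
      rintro (h | h)
      · exact hyA h
      · exact hzy h.symm
    rw [ancL_of_not_mem hv2,
      show (A ++ [c, z, v] : List V) = (A ++ [c, z]) ++ v :: [] by simp,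
      ancL_middle (by simpa using hnd)]
    have ht := hfull t
    constructor
    · rintro rfl
      exact Or.inl rfl
    · rintro (rfl | h | h)
      · rfl
      · exact absurd h List.not_mem_nil
      · exact absurd (by simpa using ht) h
  · by_cases hvA : v ∈ A
    · obtain ⟨A1, A2, rfl⟩ := List.append_of_mem hvA
      have hcA2 : c ∉ A2 := fun h => hcA (by simp [h])
      have hzA2 : z ∉ A2 := fun h => hzA (by simp [h])
      have hyA2 : y ∉ A2 := fun h => hyA (by simp [h])
      have e1 : (A1 ++ v :: A2) ++ [c, z, y] = A1 ++ v :: (A2 ++ [c, z, y]) := by simp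
      have e2 : (A1 ++ v :: A2) ++ [z] = A1 ++ v :: (A2 ++ [z]) := by simp
      rw [e1] at hnd; rw [e2] at hnd'
      have hfull' : ∀ w, w ∈ A1 ++ v :: (A2 ++ [c, z, y]) := fun w => e1 ▸ hfull w
      rw [e1, e2]
      refine ancL_iff_of_split hnd hnd' (fun t => ?_) t
      have ht := hfull' t
      by_cases h1 : t = c <;> by_cases h2 : t = z <;> by_cases h3 : t = y <;>
        simp_all [List.mem_append, List.mem_cons]
    · exfalso
      have := hfull v
      simp only [List.mem_append, List.mem_cons, List.mem_singleton, List.not_mem_nil,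
        or_false] at this
      rcases this with h | h | h | h
      · exact hvA h
      · exact hvc h
      · exact hvz h
      · exact hvy h

lemma move_eat2 (hG : ∀ u v, G.Adj u v ↔ s u ≠ s v) (hOk : Ok s (A ++ [c, z, y]))
    (hfull : ∀ v, v ∈ A ++ [c, z, y]) (hcz : s c ≠ s z) (hsy : s c = s y) :
    ∃ h' : Ok s (A ++ [z]),
      (rotationGraph G).Adj (mk hG _ hOk) (mk hG _ h') := by
  have hnd := hOk.nd
  obtain ⟨hcA, hzA, hyA, hcez, hcy, hzy⟩ := eat2_facts A c z y hnd
  have hnd' := eat2_nodup A c z y hnd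
  have h' : Ok s (A ++ [z]) := by
    constructor
    · simp
    · exact hnd'
    · intro a b ha hb
      have key : ∀ g, g ∉ A ++ [z] → s g = s c := by
        intro g hg
        have := hfull g
        simp only [List.mem_append, List.mem_cons, List.mem_singleton, List.not_mem_nil,
          or_false] at this hg
        push_neg at hg
        rcases this with h | h | h | h
        · exact absurd h hg.1
        · rw [h]
        · exact absurd h hg.2
        · rw [h, ← hsy]
      rw [key a ha, key b hb]
    · intro v hv
      by_cases hvz : v = z
      · subst hvz
        right
        refine ⟨c, ?_, v, ancL_refl _ _, hcz⟩
        rw [eat2_anc_b A c v y hnd hfull]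
        exact ancL_refl _ _
      · have hvc : v ≠ c := by
          rintro rfl
          simp only [List.mem_append, List.mem_singleton] at hv
          rcases hv with h | h
          · exact hcA h
          · exact hcez h
        have hvL : v ∈ A ++ [c, z, y] := hfull v
        exact suff_transfer (fun w => eat2_anc_other A c z y hnd hfull hvc hvz w)
          (hOk.suff v hvL)
  refine ⟨h', adj_of hG hOk h' c z hcez ?_ (eat2_anc_b A c z y hnd hfull)
    (fun v h1 h2 w => eat2_anc_other A c z y hnd hfull h1 h2 w)⟩
  rw [show (A ++ [c, z, y] : List V) = A ++ c :: [z, y] from rfl, ancL_middle hnd]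
  simp

end Eat2

/-! ### re-encoding : a last spine vertex over an empty pool may be pooled instead -/

section Reencode
variable (A : List V) (u : V)

lemma reencode_anc (hnd : (A ++ [u]).Nodup) (hfull : ∀ v, v ∈ A ++ [u]) (v w : V) :
    ancL A v w ↔ ancL (A ++ [u]) v w := by
  have huA : u ∉ A := by
    rw [List.nodup_append] at hnd
    exact fun h => hnd.2.2 _ h _ (by simp) rfl
  by_cases hvu : v = u
  · subst hvu
    rw [ancL_of_not_mem huA,
      show (A ++ [v] : List V) = A ++ v :: [] from rfl, ancL_middle hnd]
    have hw := hfull w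
    constructor
    · intro h
      exact Or.inl h.symm
    · rintro (rfl | h | h)
      · rfl
      · exact absurd h List.not_mem_nil
      · exact absurd hw h
  · by_cases hvA : v ∈ A
    · obtain ⟨A1, A2, rfl⟩ := List.append_of_mem hvA
      have e1 : (A1 ++ v :: A2) ++ [u] = A1 ++ v :: (A2 ++ [u]) := by simp
      have hndA : (A1 ++ v :: A2).Nodup := List.Nodup.of_append_left hnd
      rw [e1] at hnd
      rw [e1]
      have huA1 : u ∉ A1 := fun h => huA (by simp [h])
      have huA2 : u ∉ A2 := fun h => huA (by simp [h])
      have huv : u ≠ v := fun h => huA (by simp [h])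
      refine ancL_iff_of_split hnd hndA (fun t => ?_) w
      have ht : t ∈ A1 ++ v :: (A2 ++ [u]) := e1 ▸ hfull t
      by_cases h1 : t = u <;> simp_all [List.mem_append, List.mem_cons]
    · have hv1 : v ∉ A ++ [u] := by
        simp only [List.mem_append, List.mem_singleton]
        rintro (h | h)
        · exact hvA h
        · exact hvu h
      rw [ancL_of_not_mem hvA, ancL_of_not_mem hv1]

lemma reencode (hG : ∀ u v, G.Adj u v ↔ s u ≠ s v) (hOk : Ok s (A ++ [u]))
    (hfull : ∀ v, v ∈ A ++ [u]) (hA : A ≠ []) :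
    ∃ h' : Ok s A, mk hG (A ++ [u]) hOk = mk hG A h' := by
  have hnd := hOk.nd
  have h' : Ok s A := by
    constructor
    · exact hA
    · exact List.Nodup.of_append_left hnd
    · intro a b ha hb
      have ha' : a = u := by
        have := hfull a
        simp only [List.mem_append, List.mem_singleton] at this
        rcases this with h | h
        · exact absurd h ha
        · exact h
      have hb' : b = u := by
        have := hfull b
        simp only [List.mem_append, List.mem_singleton] at this
        rcases this with h | h
        · exact absurd h hb
        · exact h
      rw [ha', hb']
    · intro v hv
      exact suff_transfer (fun w => reencode_anc A u hnd hfull v w)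
        (hOk.suff v (by simp [hv]))
  exact ⟨h', SearchTree.ext' (fun v w => (reencode_anc A u hnd hfull v w).symm)⟩

end Reencode

end Moves3

end KPQ

namespace KPQ
set_option linter.unusedSectionVars false
set_option maxHeartbeats 1000000

variable {V : Type} [DecidableEq V] [Fintype V]

section Counting

variable {s : V → Bool}

/-- number of pairs (true-side above false-side) -/
def bEnc (s : V → Bool) (L : List V) : ℕ :=
  (Finset.univ.filter fun p : V × V => s p.1 = true ∧ s p.2 = false ∧ ancL L p.1 p.2).card

lemma bEnc_step {L L' : List V} {a b : V} (hsa : s a = true) (hsb : s b = false)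
    (hanc : ancL L a b) (hanc' : ¬ ancL L' a b)
    (hiff : ∀ α β, (α, β) ≠ (a, b) → s α = true → s β = false →
      (ancL L' α β ↔ ancL L α β)) :
    bEnc s L = bEnc s L' + 1 := by
  have hset : (Finset.univ.filter fun p : V × V =>
      s p.1 = true ∧ s p.2 = false ∧ ancL L' p.1 p.2) =
      (Finset.univ.filter fun p : V × V =>
      s p.1 = true ∧ s p.2 = false ∧ ancL L p.1 p.2).erase (a, b) := by
    ext p
    simp only [Finset.mem_erase, Finset.mem_filter, Finset.mem_univ, true_and]
    constructor
    · rintro ⟨h1, h2, h3⟩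
      have hne : p ≠ (a, b) := by
        rintro rfl
        exact hanc' h3
      exact ⟨hne, h1, h2, (hiff p.1 p.2 (by rwa [← Prod.mk.eta (p := p)] at hne) h1 h2).1 h3⟩
    · rintro ⟨hne, h1, h2, h3⟩
      exact ⟨h1, h2, (hiff p.1 p.2 (by rwa [← Prod.mk.eta (p := p)] at hne) h1 h2).2 h3⟩
  have hmem : (a, b) ∈ (Finset.univ.filter fun p : V × V =>
      s p.1 = true ∧ s p.2 = false ∧ ancL L p.1 p.2) := by
    simp only [Finset.mem_filter, Finset.mem_univ, true_and]
    exact ⟨hsa, hsb, hanc⟩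
  unfold bEnc
  rw [hset]
  exact (Finset.card_erase_add_one hmem).symm

lemma bEnc_swap {A B : List V} {u x : V} (hnd : (A ++ u :: x :: B).Nodup)
    (hsu : s u = true) (hsx : s x = false) :
    bEnc s (A ++ u :: x :: B) = bEnc s (A ++ x :: u :: B) + 1 := by
  refine bEnc_step hsu hsx ?_ ?_ ?_
  · rw [ancL_middle hnd]; simp
  · rw [swap_anc_a A B u x hnd]
    simp
  · intro α β hne hta htb
    by_cases hau : α = u
    · subst hau
      have hbx : β ≠ x := by
        rintro rfl
        exact hne rfl
      rw [swap_anc_a A B α x hnd]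
      exact ⟨fun h => h.1, fun h => ⟨h, hbx⟩⟩
    · by_cases hax : α = x
      · exfalso
        rw [hax, hsx] at hta
        exact Bool.false_ne_true hta
      · exact swap_anc_other A B u x hnd hau hax β

lemma bEnc_pull {A : List V} {u f : V} (hnd : (A ++ [u]).Nodup) (hf : f ∉ A ++ [u])
    (hsu : s u = true) (hsf : s f = false) :
    bEnc s (A ++ [u]) = bEnc s (A ++ [f, u]) + 1 := by
  refine bEnc_step hsu hsf (ancL_of_mem_of_not_mem (by simp) hf) ?_ ?_
  · rw [pull_anc_a A u f hnd hf]
    simp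
  · intro α β hne hta htb
    by_cases hau : α = u
    · subst hau
      have hbf : β ≠ f := by
        rintro rfl
        exact hne rfl
      rw [pull_anc_a A α f hnd hf]
      exact ⟨fun h => h.1, fun h => ⟨h, hbf⟩⟩
    · by_cases haf : α = f
      · exfalso
        rw [haf, hsf] at hta
        exact Bool.false_ne_true hta
      · exact pull_anc_other A u f hnd hf hau haf β

lemma bEnc_eat {A : List V} {c z : V} (hnd : (A ++ [c, z]).Nodup)
    (hsc : s c = true) (hsz : s z = false)
    (hcs : ∀ y, y ∉ A ++ [c, z] → s y = s c) :
    bEnc s (A ++ [c, z]) = bEnc s (A ++ [z]) + 1 := by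
  obtain ⟨hcA, hzA, hcz⟩ := eat_facts A c z hnd
  have hcL' : c ∉ A ++ [z] := by
    simp only [List.mem_append, List.mem_singleton]
    rintro (h | h)
    · exact hcA h
    · exact hcz h
  refine bEnc_step hsc hsz ?_ ?_ ?_
  · rw [show (A ++ [c, z] : List V) = A ++ c :: [z] from rfl, ancL_middle hnd]
    simp
  · rw [ancL_of_not_mem hcL']
    exact hcz
  · intro α β hne hta htb
    by_cases hac : α = c
    · subst hac
      have hbz : β ≠ z := by
        rintro rfl
        exact hne rfl
      rw [ancL_of_not_mem hcL',
        show (A ++ [α, z] : List V) = A ++ α :: [z] from rfl, ancL_middle hnd]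
      constructor
      · rintro rfl
        exact Or.inl rfl
      · rintro (rfl | h | h)
        · rfl
        · exact absurd (List.mem_singleton.1 h) hbz
        · exfalso
          have := hcs β h
          rw [htb, hta] at this
          exact Bool.false_ne_true this
    · by_cases haz : α = z
      · exfalso
        rw [haz, hsz] at hta
        exact Bool.false_ne_true hta
      · exact eat_anc_other A c z hnd hac haz β

lemma bEnc_reencode {A : List V} {u : V} (hnd : (A ++ [u]).Nodup)
    (hfull : ∀ v, v ∈ A ++ [u]) :
    bEnc s (A ++ [u]) = bEnc s A := by
  unfold bEnc
  congr 1
  apply Finset.filter_congr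
  intro p _
  rw [reencode_anc A u hnd hfull p.1 p.2]

/-- the number of vertices on side `b` -/
def sideCard (s : V → Bool) (b : Bool) : ℕ := (Finset.univ.filter fun v => s v = b).card

lemma bEnc_partition {L : List V} (hOk : Ok s L) :
    bEnc s L + bEnc (fun v => !(s v)) L = sideCard s true * sideCard s false := by
  classical
  set C : Finset (V × V) := Finset.univ.filter fun p : V × V => s p.1 = true ∧ s p.2 = false
    with hC
  have hCcard : C.card = sideCard s true * sideCard s false := by
    have : C = (Finset.univ.filter fun v => s v = true) ×ˢ
        (Finset.univ.filter fun v => s v = false) := by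
      ext p
      simp only [hC, Finset.mem_filter, Finset.mem_univ, true_and, Finset.mem_product]
    rw [this, Finset.card_product]
    rfl
  have hB : bEnc s L = (C.filter fun p => ancL L p.1 p.2).card := by
    unfold bEnc
    rw [hC, Finset.filter_filter]
    congr 1
    apply Finset.filter_congr
    intro p _
    simp [and_assoc]
  have hA : bEnc (fun v => !(s v)) L = (C.filter fun p => ancL L p.2 p.1).card := by
    unfold bEnc
    refine Finset.card_bij' (fun (p : V × V) _ => (p.2, p.1)) (fun (p : V × V) _ => (p.2, p.1))
      ?_ ?_ ?_ ?_
    · intro p hp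
      simp only [Finset.mem_filter, Finset.mem_univ, true_and] at hp
      obtain ⟨h1, h2, h3⟩ := hp
      rw [Bool.not_eq_true'] at h1
      rw [Bool.not_eq_false'] at h2
      refine Finset.mem_filter.2 ⟨?_, h3⟩
      rw [hC]
      exact Finset.mem_filter.2 ⟨Finset.mem_univ _, h2, h1⟩
    · intro p hp
      rw [Finset.mem_filter] at hp
      obtain ⟨hpc, h3⟩ := hp
      rw [hC, Finset.mem_filter] at hpc
      obtain ⟨-, h1, h2⟩ := hpc
      refine Finset.mem_filter.2 ⟨Finset.mem_univ _, ?_, ?_, h3⟩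
      · rw [Bool.not_eq_true']; exact h2
      · rw [Bool.not_eq_false']; exact h1
    · intro p _
      rfl
    · intro p _
      rfl
  have hsplit : (C.filter fun p => ancL L p.1 p.2).card +
      (C.filter fun p => ¬ ancL L p.1 p.2).card = C.card :=
    Finset.card_filter_add_card_filter_not (fun p : V × V => ancL L p.1 p.2)
  have hAeq : (C.filter fun p => ¬ ancL L p.1 p.2) = (C.filter fun p => ancL L p.2 p.1) := by
    ext p
    simp only [hC, Finset.mem_filter, Finset.mem_univ, true_and]
    constructor
    · rintro ⟨⟨h1, h2⟩, h3⟩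
      refine ⟨⟨h1, h2⟩, ?_⟩
      have hne : p.1 ≠ p.2 := by
        intro h
        rw [h, h2] at h1
        exact Bool.false_ne_true h1
      by_cases hm1 : p.1 ∈ L
      · by_cases hm2 : p.2 ∈ L
        · rcases ancL_total_of_mem hm1 hm2 with h | h
          · exact absurd h h3
          · exact h
        · exact absurd (ancL_of_mem_of_not_mem hm1 hm2) h3
      · by_cases hm2 : p.2 ∈ L
        · exact ancL_of_mem_of_not_mem hm2 hm1
        · exfalso
          have := hOk.compl p.1 p.2 hm1 hm2
          rw [h1, h2] at this
          exact absurd this (by decide)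
    · rintro ⟨⟨h1, h2⟩, h3⟩
      refine ⟨⟨h1, h2⟩, fun hcon => ?_⟩
      have := ancL_antisymm hcon h3
      rw [this, h2] at h1
      exact Bool.false_ne_true h1
  rw [hB, hA, ← hAeq, hsplit, hCcard]

end Counting

end KPQ

namespace KPQ
set_option linter.unusedSectionVars false
set_option maxHeartbeats 1000000

variable {V : Type} [DecidableEq V] [Fintype V]

section Phase1

variable {G : SimpleGraph V} {s : V → Bool}

lemma edist_le_one_of_adj {W : Type} {H : SimpleGraph W} {a b : W} (h : H.Adj a b) :
    H.edist a b ≤ 1 := by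
  have := SimpleGraph.edist_le (SimpleGraph.Walk.cons h SimpleGraph.Walk.nil)
  simpa using this

lemma last_true_decomp (s : V → Bool) (L : List V) :
    (∀ v ∈ L, s v = false) ∨
    ∃ A u X, L = A ++ u :: X ∧ s u = true ∧ ∀ x ∈ X, s x = false := by
  induction L using List.reverseRecOn with
  | nil => left; simp
  | append_singleton Y y ih =>
    by_cases hy : s y = true
    · right
      exact ⟨Y, y, [], by simp, hy, by simp⟩
    · have hy' : s y = false := by
        cases h : s y
        · rfl
        · exact absurd h hy
      rcases ih with h | ⟨A, u, X, rfl, hu, hX⟩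
      · left
        intro v hv
        rcases List.mem_append.1 hv with h' | h'
        · exact h v h'
        · rw [List.mem_singleton.1 h']
          exact hy'
      · right
        refine ⟨A, u, X ++ [y], by simp, hu, ?_⟩
        intro x hx
        rcases List.mem_append.1 hx with h' | h'
        · exact hX x h'
        · rw [List.mem_singleton.1 h']
          exact hy'

/-- measure for the phase-1 induction -/
def meas (s : V → Bool) (L : List V) : ℕ :=
  (Fintype.card V + 1) * bEnc s L + (L.filter s).length

lemma meas_lt {L L' : List V} (h : bEnc s L = bEnc s L' + 1) (hnd' : L'.Nodup) :
    meas s L' < meas s L := by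
  unfold meas
  rw [h]
  have h2 : (L'.filter s).length ≤ Fintype.card V :=
    le_trans (List.length_filter_le _ _) hnd'.length_le_card
  have h3 : (Fintype.card V + 1) * (bEnc s L' + 1) =
      (Fintype.card V + 1) * bEnc s L' + (Fintype.card V + 1) := by ring
  omega

theorem phase1 (hG : ∀ u v, G.Adj u v ↔ s u ≠ s v) (hq : ∃ v, s v = true)
    (hp : ∃ v, s v = false) :
    ∀ n, ∀ L, ∀ hOk : Ok s L, meas s L ≤ n →
    ∃ Lp, ∃ hOkp : Ok s Lp, (∀ v, v ∈ Lp ↔ s v = false) ∧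
      (rotationGraph G).edist (mk hG L hOk) (mk hG Lp hOkp) ≤ (bEnc s L : ℕ∞) := by
  intro n
  induction n using Nat.strong_induction_on with
  | _ n ih =>
  intro L hOk hm
  rcases last_true_decomp s L with hall | ⟨A, u, X, rfl, hu, hX⟩
  · -- all of L is on the false side: we are done
    refine ⟨L, hOk, ?_, ?_⟩
    · intro v
      constructor
      · exact hall v
      · intro hv
        by_contra hvL
        obtain ⟨q, hq⟩ := hq
        have hqL : q ∉ L := fun h => by
          rw [hall q h] at hq
          exact Bool.false_ne_true hq
        have := hOk.compl v q hvL hqL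
        rw [hv, hq] at this
        exact Bool.false_ne_true this
    · rw [SimpleGraph.edist_self]
      exact zero_le
  · -- L = A ++ u :: X with u the last true-side vertex
    rcases X with _ | ⟨x, X'⟩
    · -- u is the last spine vertex
      by_cases hful : ∀ v, v ∈ A ++ [u]
      · -- no pool : re-encode u as a pooled vertex and recurse on A
        have hA : A ≠ [] := by
          obtain ⟨p, hp⟩ := hp
          have := hful p
          rcases List.mem_append.1 this with h | h
          · exact List.ne_nil_of_mem h
          · rw [List.mem_singleton.1 h] at hp
            rw [hp] at hu
            exact absurd hu Bool.false_ne_true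
        obtain ⟨h', heq⟩ := reencode hG (A := A) (u := u) hOk hful hA
        have hb : bEnc s (A ++ [u]) = bEnc s A := bEnc_reencode hOk.nd hful
        have hmeas : meas s A < meas s (A ++ [u]) := by
          unfold meas
          rw [hb]
          have : ((A ++ [u]).filter s).length = (A.filter s).length + 1 := by
            rw [List.filter_append]
            simp [hu]
          omega
        obtain ⟨Lp, hOkp, hmem, hd⟩ := ih (meas s A) (lt_of_lt_of_le hmeas hm) A h'
          (le_refl _)
        refine ⟨Lp, hOkp, hmem, ?_⟩
        rw [heq, hb]
        exact hd
      · -- there is a pooled vertex : pull one up and recurse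
        push_neg at hful
        obtain ⟨f, hf⟩ := hful
        have hsf : s f = false := by
          by_contra hsf
          have hsf' : s f = true := by
            cases h : s f
            · exact absurd h hsf
            · rfl
          rcases hOk.suff u (by simp) with h | ⟨a, ha, b, hb, hab⟩
          · exact hf ((h f (ancL_of_mem_of_not_mem (by simp) hf)) ▸ (by simp : u ∈ A ++ [u]))
          · have hdesc : ∀ w, ancL (A ++ [u]) u w → s w = true := by
              intro w hw
              rw [show (A ++ [u] : List V) = A ++ u :: [] from rfl, ancL_middle hOk.nd] at hw
              rcases hw with rfl | h | h
              · exact hu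
              · exact absurd h List.not_mem_nil
              · rw [hOk.compl w f h hf]
                exact hsf'
            rw [hdesc a ha, hdesc b hb] at hab
            exact hab rfl
        have hfu : s f ≠ s u := by
          rw [hsf, hu]
          exact Bool.false_ne_true
        obtain ⟨h', hadj⟩ := move_pull A u f hG hOk hf hfu
        have hb : bEnc s (A ++ [u]) = bEnc s (A ++ [f, u]) + 1 :=
          bEnc_pull hOk.nd hf hu hsf
        obtain ⟨Lp, hOkp, hmem, hd⟩ := ih (meas s (A ++ [f, u]))
          (lt_of_lt_of_le (meas_lt hb h'.nd) hm) _ h' (le_refl _)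
        refine ⟨Lp, hOkp, hmem, ?_⟩
        calc (rotationGraph G).edist (mk hG _ hOk) (mk hG Lp hOkp)
            ≤ (rotationGraph G).edist (mk hG _ hOk) (mk hG _ h') +
              (rotationGraph G).edist (mk hG _ h') (mk hG Lp hOkp) :=
              SimpleGraph.edist_triangle
          _ ≤ 1 + (bEnc s (A ++ [f, u]) : ℕ∞) := add_le_add (edist_le_one_of_adj hadj) hd
          _ = ((bEnc s (A ++ [f, u]) + 1 : ℕ) : ℕ∞) := by push_cast; ring
          _ = (bEnc s (A ++ [u]) : ℕ∞) := by rw [← hb]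
    · rcases X' with _ | ⟨x2, X''⟩
      · -- u is next-to-last over the pool : drop it into the pool
        have hsx : s x = false := hX x (by simp)
        have hcz : s u ≠ s x := by
          rw [hu, hsx]
          exact fun h => Bool.false_ne_true h.symm
        have hcs : ∀ y, y ∉ A ++ [u, x] → s y = s u := by
          intro y hy
          have hxL : x ∈ A ++ [u, x] := by simp
          rcases hOk.suff x hxL with h | ⟨a, ha, b, hb, hab⟩
          · exact absurd ((h y (ancL_of_mem_of_not_mem hxL hy)) ▸ hxL) hy
          · by_contra hne
            have hsy : s y = false := by
              cases h : s y
              · rfl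
              · rw [hu] at hne
                exact absurd h hne
            have hdesc : ∀ w, ancL (A ++ [u, x]) x w → w = x ∨ w ∉ A ++ [u, x] := by
              intro w hw
              rw [show (A ++ [u, x] : List V) = (A ++ [u]) ++ x :: [] by simp,
                ancL_middle (by simpa using hOk.nd)] at hw
              rcases hw with rfl | h | h
              · exact Or.inl rfl
              · exact absurd h List.not_mem_nil
              · refine Or.inr (fun hc => h ?_)
                simpa using hc
            have hside : ∀ w, ancL (A ++ [u, x]) x w → s w = false := by
              intro w hw
              rcases hdesc w hw with rfl | h
              · exact hsx
              · rw [hOk.compl w y h hy]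
                exact hsy
            rw [hside a ha, hside b hb] at hab
            exact hab rfl
        obtain ⟨h', hadj⟩ := move_eat A u x hG hOk hcz hcs
        have hb : bEnc s (A ++ [u, x]) = bEnc s (A ++ [x]) + 1 :=
          bEnc_eat hOk.nd hu hsx hcs
        obtain ⟨Lp, hOkp, hmem, hd⟩ := ih (meas s (A ++ [x]))
          (lt_of_lt_of_le (meas_lt hb h'.nd) hm) _ h' (le_refl _)
        refine ⟨Lp, hOkp, hmem, ?_⟩
        calc (rotationGraph G).edist (mk hG _ hOk) (mk hG Lp hOkp)
            ≤ (rotationGraph G).edist (mk hG _ hOk) (mk hG _ h') +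
              (rotationGraph G).edist (mk hG _ h') (mk hG Lp hOkp) :=
              SimpleGraph.edist_triangle
          _ ≤ 1 + (bEnc s (A ++ [x]) : ℕ∞) := add_le_add (edist_le_one_of_adj hadj) hd
          _ = ((bEnc s (A ++ [x]) + 1 : ℕ) : ℕ∞) := by push_cast; ring
          _ = (bEnc s (A ++ [u, x]) : ℕ∞) := by rw [← hb]
      · -- u has at least two spine vertices below it : swap it down
        have hsx : s x = false := hX x (by simp)
        have hux : s u ≠ s x := by
          rw [hu, hsx]
          exact fun h => Bool.false_ne_true h.symm
        have hval : ∃ w', (w' ∈ x2 :: X'' ∨ w' ∉ A ++ u :: x :: x2 :: X'') ∧ s w' ≠ s u := by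
          refine ⟨x2, Or.inl (by simp), ?_⟩
          rw [hX x2 (by simp), hu]
          exact Bool.false_ne_true
        obtain ⟨h', hadj⟩ := move_swap A (x2 :: X'') u x hG hOk hux hval
        have hb : bEnc s (A ++ u :: x :: x2 :: X'') = bEnc s (A ++ x :: u :: x2 :: X'') + 1 :=
          bEnc_swap hOk.nd hu hsx
        obtain ⟨Lp, hOkp, hmem, hd⟩ := ih (meas s (A ++ x :: u :: x2 :: X''))
          (lt_of_lt_of_le (meas_lt hb h'.nd) hm) _ h' (le_refl _)
        refine ⟨Lp, hOkp, hmem, ?_⟩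
        calc (rotationGraph G).edist (mk hG _ hOk) (mk hG Lp hOkp)
            ≤ (rotationGraph G).edist (mk hG _ hOk) (mk hG _ h') +
              (rotationGraph G).edist (mk hG _ h') (mk hG Lp hOkp) :=
              SimpleGraph.edist_triangle
          _ ≤ 1 + (bEnc s (A ++ x :: u :: x2 :: X'') : ℕ∞) :=
              add_le_add (edist_le_one_of_adj hadj) hd
          _ = ((bEnc s (A ++ x :: u :: x2 :: X'') + 1 : ℕ) : ℕ∞) := by push_cast; ring
          _ = (bEnc s (A ++ u :: x :: x2 :: X'') : ℕ∞) := by rw [← hb]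

end Phase1

end KPQ

namespace KPQ
set_option linter.unusedSectionVars false
set_option maxHeartbeats 1000000

variable {V : Type} [DecidableEq V] [Fintype V]

section Phase2

variable {G : SimpleGraph V} {s : V → Bool}

lemma mk_congr (hG : ∀ u v, G.Adj u v ↔ s u ≠ s v) {L L' : List V} (h : L = L')
    (h1 : Ok s L) (h2 : Ok s L') : mk hG L h1 = mk hG L' h2 := by
  subst h
  rfl

/-- moving a true-side vertex up across a block of false-side vertices -/
lemma bubble (hG : ∀ u v, G.Adj u v ↔ s u ≠ s v) :
    ∀ (W U Y : List V) (t : V) (hOk : Ok s (U ++ W ++ t :: Y)),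
    (∀ x ∈ W, s x = false) → s t = true →
    (∃ g, g ∉ U ++ W ++ t :: Y ∧ s g = true) →
    ∃ hOk' : Ok s (U ++ t :: (W ++ Y)),
      (rotationGraph G).edist (mk hG _ hOk) (mk hG _ hOk') ≤ (W.length : ℕ∞) := by
  intro W
  induction W using List.reverseRecOn with
  | nil =>
    intro U Y t hOk hW ht hg
    have e : U ++ [] ++ t :: Y = U ++ t :: ([] ++ Y) := by simp
    refine ⟨e ▸ hOk, ?_⟩
    rw [← mk_congr hG e hOk (e ▸ hOk)]
    rw [SimpleGraph.edist_self]
    exact zero_le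
  | append_singleton W0 x0 ihW =>
    intro U Y t hOk hW ht hg
    have hx0 : s x0 = false := hW x0 (by simp)
    have e1 : U ++ (W0 ++ [x0]) ++ t :: Y = (U ++ W0) ++ x0 :: t :: Y := by simp
    have hOk1 : Ok s ((U ++ W0) ++ x0 :: t :: Y) := e1 ▸ hOk
    have hux : s x0 ≠ s t := by
      rw [hx0, ht]
      exact Bool.false_ne_true
    obtain ⟨g, hgm, hgt⟩ := hg
    have hval : ∃ w', (w' ∈ Y ∨ w' ∉ (U ++ W0) ++ x0 :: t :: Y) ∧ s w' ≠ s x0 := by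
      refine ⟨g, Or.inr (fun hc => hgm (by rw [e1]; exact hc)), ?_⟩
      rw [hgt, hx0]
      decide
    obtain ⟨h2, hadj⟩ := move_swap (U ++ W0) Y x0 t hG hOk1 hux hval
    have e2 : (U ++ W0) ++ t :: x0 :: Y = U ++ W0 ++ t :: (x0 :: Y) := by simp
    have hOk2 : Ok s (U ++ W0 ++ t :: (x0 :: Y)) := e2 ▸ h2
    have hg' : ∃ g', g' ∉ U ++ W0 ++ t :: (x0 :: Y) ∧ s g' = true := by
      refine ⟨g, fun hc => hgm ?_, hgt⟩
      simp only [List.mem_append, List.mem_cons] at hc ⊢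
      tauto
    obtain ⟨hOk3, hd⟩ := ihW U (x0 :: Y) t hOk2 (fun x hx => hW x (by simp [hx])) ht hg'
    have e3 : U ++ t :: (W0 ++ x0 :: Y) = U ++ t :: ((W0 ++ [x0]) ++ Y) := by simp
    refine ⟨e3 ▸ hOk3, ?_⟩
    have hstep : (rotationGraph G).edist (mk hG _ hOk) (mk hG _ hOk2) ≤ 1 := by
      rw [mk_congr hG e1 hOk hOk1, ← mk_congr hG e2 h2 hOk2]
      exact edist_le_one_of_adj hadj
    calc (rotationGraph G).edist (mk hG _ hOk) (mk hG _ (e3 ▸ hOk3))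
        ≤ (rotationGraph G).edist (mk hG _ hOk) (mk hG _ hOk2) +
          (rotationGraph G).edist (mk hG _ hOk2) (mk hG _ (e3 ▸ hOk3)) :=
          SimpleGraph.edist_triangle
      _ ≤ 1 + (W0.length : ℕ∞) := by
          refine add_le_add hstep ?_
          rw [← mk_congr hG e3 hOk3 (e3 ▸ hOk3)]
          exact hd
      _ = ((W0 ++ [x0]).length : ℕ∞) := by
          rw [List.length_append]
          push_cast
          simp [add_comm]

/-- raising a pooled true-side vertex to the top of the false block -/
lemma raise (hG : ∀ u v, G.Adj u v ↔ s u ≠ s v) (U Lp : List V) (t : V)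
    (hOk : Ok s (U ++ Lp)) (hLp : ∀ x ∈ Lp, s x = false) (hne : Lp ≠ [])
    (ht : s t = true) (htm : t ∉ U ++ Lp)
    (hg : ∃ g, g ∉ U ++ Lp ∧ s g = true ∧ g ≠ t) :
    ∃ hOk' : Ok s (U ++ t :: Lp),
      (rotationGraph G).edist (mk hG _ hOk) (mk hG _ hOk') ≤ (Lp.length : ℕ∞) := by
  rcases List.eq_nil_or_concat Lp with rfl | ⟨W, xl, hLpe⟩
  · exact absurd rfl hne
  rw [List.concat_eq_append] at hLpe
  subst hLpe
  have hxl : s xl = false := hLp xl (by simp)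
  have e1 : U ++ (W ++ [xl]) = (U ++ W) ++ [xl] := by simp
  have hOk1 : Ok s ((U ++ W) ++ [xl]) := e1 ▸ hOk
  have htm1 : t ∉ (U ++ W) ++ [xl] := fun hc => htm (by rw [e1]; exact hc)
  have hfu : s t ≠ s xl := by
    rw [ht, hxl]
    decide
  obtain ⟨h2, hadj⟩ := move_pull (U ++ W) xl t hG hOk1 htm1 hfu
  have e2 : (U ++ W) ++ [t, xl] = U ++ W ++ t :: [xl] := by simp
  have hOk2 : Ok s (U ++ W ++ t :: [xl]) := e2 ▸ h2
  obtain ⟨g, hgm, hgt, hgne⟩ := hg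
  have hg' : ∃ g', g' ∉ U ++ W ++ t :: [xl] ∧ s g' = true := by
    refine ⟨g, fun hc => ?_, hgt⟩
    simp only [List.mem_append, List.mem_cons, List.mem_singleton, List.not_mem_nil,
      or_false] at hc hgm
    tauto
  obtain ⟨hOk3, hd⟩ := bubble hG W U [xl] t hOk2 (fun x hx => hLp x (by simp [hx])) ht hg'
  have e3 : U ++ t :: (W ++ [xl]) = U ++ t :: (W ++ [xl]) := rfl
  refine ⟨hOk3, ?_⟩
  have hstep : (rotationGraph G).edist (mk hG _ hOk) (mk hG _ hOk2) ≤ 1 := by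
    rw [mk_congr hG e1 hOk hOk1, ← mk_congr hG e2 h2 hOk2]
    exact edist_le_one_of_adj hadj
  calc (rotationGraph G).edist (mk hG _ hOk) (mk hG _ hOk3)
      ≤ (rotationGraph G).edist (mk hG _ hOk) (mk hG _ hOk2) +
        (rotationGraph G).edist (mk hG _ hOk2) (mk hG _ hOk3) :=
        SimpleGraph.edist_triangle
    _ ≤ 1 + (W.length : ℕ∞) := add_le_add hstep hd
    _ = ((W ++ [xl]).length : ℕ∞) := by
        rw [List.length_append]
        push_cast
        simp [add_comm]

/-- successively dropping the false-side vertices just above the last true vertex -/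
lemma eats (hG : ∀ u v, G.Adj u v ↔ s u ≠ s v) (U : List V) (q : V) :
    ∀ (W : List V) (hOk : Ok s (U ++ W ++ [q])),
    (∀ x ∈ W, s x = false) → s q = true →
    (∀ y, y ∉ U ++ W ++ [q] → s y = false) →
    ∃ hOk' : Ok s (U ++ [q]),
      (rotationGraph G).edist (mk hG _ hOk) (mk hG _ hOk') ≤ (W.length : ℕ∞) := by
  intro W
  induction W using List.reverseRecOn with
  | nil =>
    intro hOk hW hq hcs
    have e : U ++ [] ++ [q] = U ++ [q] := by simp
    refine ⟨e ▸ hOk, ?_⟩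
    rw [← mk_congr hG e hOk (e ▸ hOk), SimpleGraph.edist_self]
    exact zero_le
  | append_singleton W0 w0 ihW =>
    intro hOk hW hq hcs
    have hw0 : s w0 = false := hW w0 (by simp)
    have e1 : U ++ (W0 ++ [w0]) ++ [q] = (U ++ W0) ++ [w0, q] := by simp
    have hOk1 : Ok s ((U ++ W0) ++ [w0, q]) := e1 ▸ hOk
    have hcz : s w0 ≠ s q := by
      rw [hw0, hq]
      exact Bool.false_ne_true
    have hcs1 : ∀ y, y ∉ (U ++ W0) ++ [w0, q] → s y = s w0 := by
      intro y hy
      rw [hw0]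
      refine hcs y (fun hc => hy ?_)
      rw [e1] at hc
      exact hc
    obtain ⟨h2, hadj⟩ := move_eat (U ++ W0) w0 q hG hOk1 hcz hcs1
    have e2 : (U ++ W0) ++ [q] = U ++ W0 ++ [q] := by simp
    have hOk2 : Ok s (U ++ W0 ++ [q]) := e2 ▸ h2
    have hcs2 : ∀ y, y ∉ U ++ W0 ++ [q] → s y = false := by
      intro y hy
      by_cases hyw : y = w0
      · rw [hyw]; exact hw0
      · refine hcs y (fun hc => hy ?_)
        simp only [List.mem_append, List.mem_cons, List.mem_singleton,
          List.not_mem_nil, or_false] at hc ⊢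
        tauto
    obtain ⟨hOk3, hd⟩ := ihW hOk2 (fun x hx => hW x (by simp [hx])) hq hcs2
    refine ⟨hOk3, ?_⟩
    have hstep : (rotationGraph G).edist (mk hG _ hOk) (mk hG _ hOk2) ≤ 1 := by
      rw [mk_congr hG e1 hOk hOk1, ← mk_congr hG e2 h2 hOk2]
      exact edist_le_one_of_adj hadj
    calc (rotationGraph G).edist (mk hG _ hOk) (mk hG _ hOk3)
        ≤ (rotationGraph G).edist (mk hG _ hOk) (mk hG _ hOk2) +
          (rotationGraph G).edist (mk hG _ hOk2) (mk hG _ hOk3) :=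
          SimpleGraph.edist_triangle
      _ ≤ 1 + (W0.length : ℕ∞) := add_le_add hstep hd
      _ = ((W0 ++ [w0]).length : ℕ∞) := by
          rw [List.length_append]
          push_cast
          simp [add_comm]

/-- the endgame : swallowing the whole false block below the last true vertex -/
lemma endgame (hG : ∀ u v, G.Adj u v ↔ s u ≠ s v) (U Lp : List V) (q : V)
    (hOk : Ok s (U ++ Lp)) (hLp : ∀ x ∈ Lp, s x = false) (hne : Lp ≠ [])
    (hq : s q = true) (hcompl : ∀ y, y ∉ U ++ Lp ↔ y = q) :
    ∃ hOk' : Ok s (U ++ [q]),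
      (rotationGraph G).edist (mk hG _ hOk) (mk hG _ hOk') ≤ (Lp.length : ℕ∞) := by
  rcases List.eq_nil_or_concat Lp with rfl | ⟨W, xl, hLpe⟩
  · exact absurd rfl hne
  rw [List.concat_eq_append] at hLpe
  subst hLpe
  have hxl : s xl = false := hLp xl (by simp)
  have e1 : U ++ (W ++ [xl]) = (U ++ W) ++ [xl] := by simp
  have hOk1 : Ok s ((U ++ W) ++ [xl]) := e1 ▸ hOk
  have hqm : q ∉ (U ++ W) ++ [xl] := by
    rw [← e1]
    exact (hcompl q).2 rfl
  have hfu : s q ≠ s xl := by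
    rw [hq, hxl]
    decide
  obtain ⟨h2, hadj⟩ := move_pull (U ++ W) xl q hG hOk1 hqm hfu
  have hstep1 : (rotationGraph G).edist (mk hG _ hOk) (mk hG _ h2) ≤ 1 := by
    rw [mk_congr hG e1 hOk hOk1]
    exact edist_le_one_of_adj hadj
  have hful2 : ∀ v, v ∈ (U ++ W) ++ [q, xl] := by
    intro v
    by_cases hv : v ∈ U ++ (W ++ [xl])
    · simp only [List.mem_append, List.mem_cons, List.mem_singleton, List.not_mem_nil,
        or_false] at hv ⊢
      tauto
    · have := (hcompl v).1 hv
      simp [this]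
  rcases List.eq_nil_or_concat W with rfl | ⟨W0, w0, hWe⟩
  · -- single false vertex : re-encode
    have e2 : (U ++ ([] : List V)) ++ [q, xl] = (U ++ [q]) ++ [xl] := by simp
    have hOk2 : Ok s ((U ++ [q]) ++ [xl]) := e2 ▸ h2
    have hU : U ++ [q] ≠ [] := by simp
    obtain ⟨h3, heq⟩ := reencode hG (A := U ++ [q]) (u := xl) hOk2
      (fun v => e2 ▸ hful2 v) hU
    refine ⟨h3, ?_⟩
    calc (rotationGraph G).edist (mk hG _ hOk) (mk hG _ h3)
        ≤ (rotationGraph G).edist (mk hG _ hOk) (mk hG _ h2) +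
          (rotationGraph G).edist (mk hG _ h2) (mk hG _ h3) :=
          SimpleGraph.edist_triangle
      _ ≤ 1 + 0 := by
          refine add_le_add hstep1 ?_
          rw [mk_congr hG e2 h2 hOk2, heq, SimpleGraph.edist_self]
      _ ≤ (([] ++ [xl] : List V).length : ℕ∞) := by simp
  · -- at least two : use the double eat and then single eats
    rw [List.concat_eq_append] at hWe
    subst hWe
    have hw0 : s w0 = false := hLp w0 (by simp)
    have e2 : (U ++ (W0 ++ [w0])) ++ [q, xl] = (U ++ W0) ++ [w0, q, xl] := by simp
    have hOk2 : Ok s ((U ++ W0) ++ [w0, q, xl]) := e2 ▸ h2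
    have hful3 : ∀ v, v ∈ (U ++ W0) ++ [w0, q, xl] := fun v => e2 ▸ hful2 v
    have hcz : s w0 ≠ s q := by
      rw [hw0, hq]
      exact Bool.false_ne_true
    have hsy : s w0 = s xl := by rw [hw0, hxl]
    obtain ⟨h3, hadj2⟩ := move_eat2 (U ++ W0) w0 q xl hG hOk2 hful3 hcz hsy
    have hstep2 : (rotationGraph G).edist (mk hG _ h2) (mk hG _ h3) ≤ 1 := by
      rw [mk_congr hG e2 h2 hOk2]
      exact edist_le_one_of_adj hadj2
    have e3 : (U ++ W0) ++ [q] = U ++ W0 ++ [q] := by simp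
    have hOk3 : Ok s (U ++ W0 ++ [q]) := e3 ▸ h3
    have hcs : ∀ y, y ∉ U ++ W0 ++ [q] → s y = false := by
      intro y hy
      by_cases hy1 : y = w0
      · rw [hy1]; exact hw0
      by_cases hy2 : y = xl
      · rw [hy2]; exact hxl
      exfalso
      have hym : y ∉ U ++ (W0 ++ [w0]) ++ [xl] := by
        intro hc
        simp only [List.mem_append, List.mem_cons, List.mem_singleton,
          List.not_mem_nil, or_false] at hc hy
        tauto
      have : y = q := (hcompl y).1 (by simpa using hym)
      rw [this] at hy
      exact hy (by simp)
    obtain ⟨hOk4, hd⟩ := eats hG U q W0 hOk3 (fun x hx => hLp x (by simp [hx])) hq hcs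
    refine ⟨hOk4, ?_⟩
    calc (rotationGraph G).edist (mk hG _ hOk) (mk hG _ hOk4)
        ≤ (rotationGraph G).edist (mk hG _ hOk) (mk hG _ h2) +
          ((rotationGraph G).edist (mk hG _ h2) (mk hG _ h3) +
           (rotationGraph G).edist (mk hG _ h3) (mk hG _ hOk4)) := by
          calc (rotationGraph G).edist (mk hG _ hOk) (mk hG _ hOk4)
              ≤ (rotationGraph G).edist (mk hG _ hOk) (mk hG _ h2) +
                (rotationGraph G).edist (mk hG _ h2) (mk hG _ hOk4) :=
                SimpleGraph.edist_triangle
            _ ≤ _ := by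
                refine add_le_add le_rfl SimpleGraph.edist_triangle
      _ ≤ 1 + (1 + (W0.length : ℕ∞)) := by
          refine add_le_add hstep1 (add_le_add hstep2 ?_)
          rw [mk_congr hG e3 h3 hOk3]
          exact hd
      _ = (((W0 ++ [w0]) ++ [xl] : List V).length : ℕ∞) := by
          simp only [List.length_append, List.length_singleton]
          push_cast
          ring

/-- Phase 2 : from the all-false spine to any prescribed all-true spine -/
lemma phase2 (hG : ∀ u v, G.Adj u v ↔ s u ≠ s v) :
    ∀ (R U Lp : List V) (hOk : Ok s (U ++ Lp)) (hOkT : Ok s (U ++ R)),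
    (∀ x ∈ Lp, s x = false) → Lp ≠ [] → (∀ x ∈ R, s x = true) → R ≠ [] →
    (∀ y, y ∉ U ++ Lp ↔ y ∈ R) → R.Nodup →
    (rotationGraph G).edist (mk hG _ hOk) (mk hG _ hOkT) ≤
      ((R.length * Lp.length : ℕ) : ℕ∞) := by
  intro R
  induction R with
  | nil =>
    intro U Lp hOk hOkT hLp hne hR hRne hcompl hnd
    exact absurd rfl hRne
  | cons t R' ih =>
    intro U Lp hOk hOkT hLp hne hR hRne hcompl hnd
    rcases R' with _ | ⟨g0, R''⟩
    · -- single vertex : the endgame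
      have hcompl' : ∀ y, y ∉ U ++ Lp ↔ y = t := by
        intro y
        rw [hcompl y, List.mem_singleton]
      obtain ⟨hOk', hd⟩ := endgame hG U Lp t hOk hLp hne (hR t (by simp)) hcompl'
      calc (rotationGraph G).edist (mk hG _ hOk) (mk hG _ hOkT)
          = (rotationGraph G).edist (mk hG _ hOk) (mk hG _ hOk') := by
            rw [mk_congr hG (rfl : U ++ [t] = U ++ [t]) hOk' hOkT]
        _ ≤ (Lp.length : ℕ∞) := hd
        _ ≤ (([t].length * Lp.length : ℕ) : ℕ∞) := by simp
    · -- raise t, then recurse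
      have htm : t ∉ U ++ Lp := (hcompl t).2 (by simp)
      have hg : ∃ g, g ∉ U ++ Lp ∧ s g = true ∧ g ≠ t := by
        refine ⟨g0, (hcompl g0).2 (by simp), hR g0 (by simp), ?_⟩
        intro h
        rw [List.nodup_cons] at hnd
        exact hnd.1 (h ▸ (by simp : g0 ∈ g0 :: R''))
      obtain ⟨hOk1, hd1⟩ := raise hG U Lp t hOk hLp hne (hR t (by simp)) htm hg
      have e1 : U ++ t :: Lp = (U ++ [t]) ++ Lp := by simp
      have hOk1' : Ok s ((U ++ [t]) ++ Lp) := e1 ▸ hOk1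
      have e2 : U ++ t :: (g0 :: R'') = (U ++ [t]) ++ (g0 :: R'') := by simp
      have hOkT' : Ok s ((U ++ [t]) ++ (g0 :: R'')) := e2 ▸ hOkT
      have hcompl2 : ∀ y, y ∉ (U ++ [t]) ++ Lp ↔ y ∈ g0 :: R'' := by
        intro y
        constructor
        · intro hy
          have hyt : y ≠ t := by
            rintro rfl
            exact hy (by simp)
          have : y ∉ U ++ Lp := by
            intro hc
            refine hy ?_
            simp only [List.mem_append, List.mem_singleton] at hc ⊢
            tauto
          have := (hcompl y).1 this
          rcases List.mem_cons.1 this with h | h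
          · exact absurd h hyt
          · exact h
        · intro hy
          have hyR : y ∈ t :: g0 :: R'' := by simp [hy]
          have hy1 : y ∉ U ++ Lp := (hcompl y).2 hyR
          have hyt : y ≠ t := by
            rintro rfl
            rw [List.nodup_cons] at hnd
            exact hnd.1 hy
          intro hc
          simp only [List.mem_append, List.mem_singleton] at hc hy1
          rcases hc with (h | h) | h
          · exact hy1 (Or.inl h)
          · exact hyt h
          · exact hy1 (Or.inr h)
      have hnd' : (g0 :: R'').Nodup := (List.nodup_cons.1 hnd).2
      have hd2 := ih (U ++ [t]) Lp hOk1' hOkT' hLp hne (fun x hx => hR x (by simp [hx]))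
        (by simp) hcompl2 hnd'
      calc (rotationGraph G).edist (mk hG _ hOk) (mk hG _ hOkT)
          ≤ (rotationGraph G).edist (mk hG _ hOk) (mk hG _ hOk1) +
            (rotationGraph G).edist (mk hG _ hOk1) (mk hG _ hOkT) :=
            SimpleGraph.edist_triangle
        _ ≤ (Lp.length : ℕ∞) + (((g0 :: R'').length * Lp.length : ℕ) : ℕ∞) := by
            refine add_le_add hd1 ?_
            rw [mk_congr hG e1 hOk1 hOk1', mk_congr hG e2 hOkT hOkT']
            exact hd2
        _ = (((t :: g0 :: R'').length * Lp.length : ℕ) : ℕ∞) := by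
            have harr : (t :: g0 :: R'').length * Lp.length =
                Lp.length + (g0 :: R'').length * Lp.length := by
              simp only [List.length_cons]
              ring
            rw [harr]
            push_cast
            ring

end Phase2

end KPQ

namespace KPQ
set_option linter.unusedSectionVars false
set_option maxHeartbeats 1000000

variable {V : Type} [DecidableEq V] [Fintype V]

section Master

variable {G : SimpleGraph V} {s : V → Bool}

lemma Ok_congr {s s' : V → Bool} (hss : ∀ v, s v = s' v) {L : List V} (h : Ok s L) :
    Ok s' L := by
  constructor
  · exact h.ne
  · exact h.nd
  · intro u v hu hv
    rw [← hss u, ← hss v]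
    exact h.compl u v hu hv
  · intro v hv
    rcases h.suff v hv with h' | ⟨a, ha, b, hb, hab⟩
    · exact Or.inl h'
    · exact Or.inr ⟨a, ha, b, hb, by rw [← hss a, ← hss b]; exact hab⟩

lemma Ok_flip {L : List V} (h : Ok s L) : Ok (fun v => !(s v)) L := by
  constructor
  · exact h.ne
  · exact h.nd
  · intro u v hu hv
    simp only [h.compl u v hu hv]
  · intro v hv
    rcases h.suff v hv with h' | ⟨a, ha, b, hb, hab⟩
    · exact Or.inl h'
    · exact Or.inr ⟨a, ha, b, hb, fun hc => hab (by
        have := congrArg Bool.not hc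
        simpa using this)⟩

lemma bEnc_congr {s s' : V → Bool} (hss : ∀ v, s v = s' v) (L : List V) :
    bEnc s L = bEnc s' L := by
  unfold bEnc
  congr 1
  apply Finset.filter_congr
  intro p _
  rw [hss p.1, hss p.2]

lemma sideCard_congr {s s' : V → Bool} (hss : ∀ v, s v = s' v) (b : Bool) :
    sideCard s b = sideCard s' b := by
  unfold sideCard
  congr 1
  apply Finset.filter_congr
  intro v _
  rw [hss v]

lemma sideCard_flip (b : Bool) : sideCard (fun v => !(s v)) b = sideCard s (!b) := by
  unfold sideCard
  congr 1
  apply Finset.filter_congr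
  intro v _
  cases b <;> cases h : s v <;> simp [h]

theorem master (hG : ∀ u v, G.Adj u v ↔ s u ≠ s v) (hq : ∃ v, s v = true)
    (hp : ∃ v, s v = false) {L1 L2 : List V} (h1 : Ok s L1) (h2 : Ok s L2) :
    (rotationGraph G).edist (mk hG L1 h1) (mk hG L2 h2) ≤
      ((bEnc s L1 + sideCard s true * sideCard s false + bEnc (fun v => !(s v)) L2 : ℕ) :
        ℕ∞) := by
  classical
  obtain ⟨Lp, hOkp, hmemp, d1⟩ := phase1 hG hq hp (meas s L1) L1 h1 le_rfl
  set s' : V → Bool := fun v => !(s v) with hs'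
  have hG' : ∀ u v, G.Adj u v ↔ s' u ≠ s' v := by
    intro u v
    rw [hG u v]
    constructor
    · intro h hc
      refine h ?_
      have := congrArg Bool.not hc
      simpa [hs'] using this
    · intro h hc
      exact h (by rw [hs']; simp [hc])
  have hq' : ∃ v, s' v = true := by
    obtain ⟨v, hv⟩ := hp
    exact ⟨v, by simp [hs', hv]⟩
  have hp' : ∃ v, s' v = false := by
    obtain ⟨v, hv⟩ := hq
    exact ⟨v, by simp [hs', hv]⟩
  obtain ⟨Lq, hOkq', hmemq, d3⟩ := phase1 hG' hq' hp' (meas s' L2) L2 (Ok_flip h2) le_rfl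
  have hOkq : Ok s Lq := Ok_congr (fun v => by simp [hs']) (Ok_flip hOkq')
  have hLpf : ∀ x ∈ Lp, s x = false := fun x hx => (hmemp x).1 hx
  have hLpne : Lp ≠ [] := by
    obtain ⟨v, hv⟩ := hp
    exact List.ne_nil_of_mem ((hmemp v).2 hv)
  have hmemq' : ∀ x, x ∈ Lq ↔ s x = true := by
    intro x
    rw [hmemq x, hs']
    simp
  have hLqt : ∀ x ∈ Lq, s x = true := fun x hx => (hmemq' x).1 hx
  have hLqne : Lq ≠ [] := by
    obtain ⟨v, hv⟩ := hq
    exact List.ne_nil_of_mem ((hmemq' v).2 hv)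
  have hcompl : ∀ y, y ∉ ([] : List V) ++ Lp ↔ y ∈ Lq := by
    intro y
    rw [List.nil_append, hmemq' y]
    constructor
    · intro hy
      cases h : s y
      · exact absurd ((hmemp y).2 h) hy
      · rfl
    · intro hy hc
      rw [(hmemp y).1 hc] at hy
      exact Bool.false_ne_true hy
  have hOkLp0 : Ok s (([] : List V) ++ Lp) := by rw [List.nil_append]; exact hOkp
  have hOkLq0 : Ok s (([] : List V) ++ Lq) := by rw [List.nil_append]; exact hOkq
  have d2 := phase2 hG Lq [] Lp hOkLp0 hOkLq0 hLpf hLpne hLqt hLqne hcompl hOkq'.nd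
  have hlp : Lp.length = sideCard s false := by
    have ht : Lp.toFinset = Finset.univ.filter (fun v => s v = false) := by
      ext v
      simp only [List.mem_toFinset, Finset.mem_filter, Finset.mem_univ, true_and]
      exact hmemp v
    rw [← List.toFinset_card_of_nodup hOkp.nd, ht]
    rfl
  have hlq : Lq.length = sideCard s true := by
    have ht : Lq.toFinset = Finset.univ.filter (fun v => s v = true) := by
      ext v
      simp only [List.mem_toFinset, Finset.mem_filter, Finset.mem_univ, true_and]
      exact hmemq' v
    rw [← List.toFinset_card_of_nodup hOkq'.nd, ht]
    rfl
  -- tree identifications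
  have eT1 : mk hG (([] : List V) ++ Lp) hOkLp0 = mk hG Lp hOkp :=
    mk_congr hG (List.nil_append Lp) _ _
  have eT2 : mk hG (([] : List V) ++ Lq) hOkLq0 = mk hG Lq hOkq :=
    mk_congr hG (List.nil_append Lq) _ _
  have eT3 : mk hG' Lq hOkq' = mk hG Lq hOkq :=
    SearchTree.ext' (fun u v => Iff.rfl)
  have eT4 : mk hG' L2 (Ok_flip h2) = mk hG L2 h2 :=
    SearchTree.ext' (fun u v => Iff.rfl)
  rw [eT1, eT2] at d2
  rw [eT3, eT4] at d3
  calc (rotationGraph G).edist (mk hG L1 h1) (mk hG L2 h2)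
      ≤ (rotationGraph G).edist (mk hG L1 h1) (mk hG Lp hOkp) +
        ((rotationGraph G).edist (mk hG Lp hOkp) (mk hG Lq hOkq) +
         (rotationGraph G).edist (mk hG Lq hOkq) (mk hG L2 h2)) := by
        calc (rotationGraph G).edist (mk hG L1 h1) (mk hG L2 h2)
            ≤ (rotationGraph G).edist (mk hG L1 h1) (mk hG Lp hOkp) +
              (rotationGraph G).edist (mk hG Lp hOkp) (mk hG L2 h2) :=
              SimpleGraph.edist_triangle
          _ ≤ _ := add_le_add le_rfl SimpleGraph.edist_triangle
    _ ≤ (bEnc s L1 : ℕ∞) + (((Lq.length * Lp.length : ℕ) : ℕ∞) + (bEnc s' L2 : ℕ∞)) := by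
        refine add_le_add d1 (add_le_add d2 ?_)
        rw [SimpleGraph.edist_comm]
        exact d3
    _ = ((bEnc s L1 + sideCard s true * sideCard s false + bEnc s' L2 : ℕ) : ℕ∞) := by
        rw [hlp, hlq]
        push_cast
        ring

end Master

end KPQ


open KPQ

/-- For all positive integers `p, q` and any two search trees
`T1, T2` on the complete bipartite graph `K_{p,q}`, `dist(T1, T2) ≤ 2pq`. -/
theorem kpq_dist_upper (p q : ℕ) (hp : 0 < p) (hq : 0 < q)
    (T1 T2 : SearchTree (completeBipartiteGraph (Fin p) (Fin q))) :
    (rotationGraph (completeBipartiteGraph (Fin p) (Fin q))).edist T1 T2 ≤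
      ((2 * p * q : ℕ) : ℕ∞) := by
  classical
  set s : Fin p ⊕ Fin q → Bool := Sum.isRight with hs
  have hG : ∀ u v, (completeBipartiteGraph (Fin p) (Fin q)).Adj u v ↔ s u ≠ s v := by
    intro u v
    cases u <;> cases v <;> simp [completeBipartiteGraph, hs]
  have hqe : ∃ v : Fin p ⊕ Fin q, s v = true := ⟨Sum.inr ⟨0, hq⟩, rfl⟩
  have hpe : ∃ v : Fin p ⊕ Fin q, s v = false := ⟨Sum.inl ⟨0, hp⟩, rfl⟩
  obtain ⟨L1, h1, e1⟩ := classify hG T1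
  obtain ⟨L2, h2, e2⟩ := classify hG T2
  subst e1
  subst e2
  have hT : sideCard s true = q := by
    have : (Finset.univ.filter fun v : Fin p ⊕ Fin q => s v = true) =
        Finset.univ.map ⟨Sum.inr, Sum.inr_injective⟩ := by
      ext v
      cases v <;> simp [hs]
    unfold sideCard
    rw [this, Finset.card_map, Finset.card_univ, Fintype.card_fin]
  have hF : sideCard s false = p := by
    have : (Finset.univ.filter fun v : Fin p ⊕ Fin q => s v = false) =
        Finset.univ.map ⟨Sum.inl, Sum.inl_injective⟩ := by
      ext v
      cases v <;> simp [hs]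
    unfold sideCard
    rw [this, Finset.card_map, Finset.card_univ, Fintype.card_fin]
  have hG' : ∀ u v, (completeBipartiteGraph (Fin p) (Fin q)).Adj u v ↔
      (fun v => !(s v)) u ≠ (fun v => !(s v)) v := by
    intro u v
    rw [hG u v]
    constructor
    · intro h hc
      refine h ?_
      have := congrArg Bool.not hc
      simpa using this
    · intro h hc
      exact h (by simp [hc])
  have hqe' : ∃ v : Fin p ⊕ Fin q, (fun v => !(s v)) v = true := by
    obtain ⟨v, hv⟩ := hpe
    exact ⟨v, by simp [hv]⟩
  have hpe' : ∃ v : Fin p ⊕ Fin q, (fun v => !(s v)) v = false := by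
    obtain ⟨v, hv⟩ := hqe
    exact ⟨v, by simp [hv]⟩
  have m1 := master hG hqe hpe h1 h2
  have m2 := master hG' hqe' hpe' (Ok_flip h1) (Ok_flip h2)
  have eA : mk hG' L1 (Ok_flip h1) = mk hG L1 h1 := SearchTree.ext' (fun u v => Iff.rfl)
  have eB : mk hG' L2 (Ok_flip h2) = mk hG L2 h2 := SearchTree.ext' (fun u v => Iff.rfl)
  rw [eA, eB] at m2
  have part1 := bEnc_partition (s := s) h1
  have part2 := bEnc_partition (s := s) h2
  have hm2' : (rotationGraph (completeBipartiteGraph (Fin p) (Fin q))).edist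
      (mk hG L1 h1) (mk hG L2 h2) ≤
      ((bEnc (fun v => !(s v)) L1 + sideCard s false * sideCard s true +
        bEnc s L2 : ℕ) : ℕ∞) := by
    refine le_trans m2 ?_
    have e1' : sideCard (fun v => !(s v)) true = sideCard s false := by
      have := sideCard_flip (s := s) true
      simpa using this
    have e2' : sideCard (fun v => !(s v)) false = sideCard s true := by
      have := sideCard_flip (s := s) false
      simpa using this
    have e3' : bEnc (fun v => !((fun w => !(s w)) v)) L2 = bEnc s L2 :=
      bEnc_congr (fun v => by simp) L2
    rw [e1', e2', e3']
  rw [hT, hF] at m1 hm2' part1 part2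
  rw [Nat.mul_comm q p] at m1 part1 part2
  have h2pq : 2 * p * q = p * q + p * q := by ring
  by_cases hcase : bEnc s L1 + bEnc (fun v => !(s v)) L2 ≤ p * q
  · refine le_trans m1 ?_
    rw [Nat.cast_le, h2pq]
    omega
  · refine le_trans hm2' ?_
    rw [Nat.cast_le, h2pq]
    omega
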